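/- arXiv:2008.13589 — 3 statements merged into one kernel-verified Lean document; each statement's English description precedes it below -/
import Mathlib

section
/- Let G be an undirected graph with minimum degree Δ, and run the biased majority dynamics with bias α ≤ (1-ε)/2 for a constant 0 < ε < 1, started from the all-zeros configuration. Then the expected absorption time τ to reach the all-ones configuration satisfies E[τ] ≥ e^{ε²Δ/6}/(6n). -/
open MeasureTheory Finset
open scoped Classical

/-- Probability that the majority rule outputs `1` at node `u` in configuration
`c` (majority of neighbors, ties broken uniformly). -/
noncomputable def majorityProb {V : Type*} [Fintype V] (G : SimpleGraph V)
    (c : V → Bool) (u : V) : ℝ :=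
  if G.degree u < 2 * ((G.neighborFinset u).filter (fun v => c v = true)).card then 1
  else if 2 * ((G.neighborFinset u).filter (fun v => c v = true)).card = G.degree u
  then 1 / 2 else 0

/-- One-step transition probability of the biased majority dynamics: a uniformly
random node `u` updates, adopting `1` with probability `α` and otherwise the
majority value among its neighbors. -/
noncomputable def stepProb {V : Type*} [Fintype V] (G : SimpleGraph V) (α : ℝ)
    (c c' : V → Bool) : ℝ :=
  (1 / Fintype.card V) *
    ∑ u : V,
      ((if c' = Function.update c u true then α + (1 - α) * majorityProb G c u else 0) +
        (if c' = Function.update c u false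
          then 1 - (α + (1 - α) * majorityProb G c u) else 0))

namespace BMD

variable {V : Type*} [Fintype V]

lemma majorityProb_nonneg (G : SimpleGraph V) (c : V → Bool) (u : V) :
    0 ≤ majorityProb G c u := by
  unfold majorityProb; split_ifs <;> norm_num

lemma majorityProb_le_one (G : SimpleGraph V) (c : V → Bool) (u : V) :
    majorityProb G c u ≤ 1 := by
  unfold majorityProb; split_ifs <;> norm_num

lemma majorityProb_eq_zero (G : SimpleGraph V) (c : V → Bool) (u : V)
    (h : 2 * ((G.neighborFinset u).filter (fun v => c v = true)).card < G.degree u) :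
    majorityProb G c u = 0 := by
  unfold majorityProb
  rw [if_neg (by omega), if_neg (by omega)]

noncomputable def qv (G : SimpleGraph V) (α : ℝ) (u : V) (c : V → Bool) : ℝ :=
  α + (1 - α) * majorityProb G c u

lemma qv_nonneg (G : SimpleGraph V) {α : ℝ} (h0 : 0 ≤ α) (h1 : α ≤ 1) (u : V) (c : V → Bool) :
    0 ≤ qv G α u c :=
  add_nonneg h0 (mul_nonneg (by linarith) (majorityProb_nonneg G c u))

lemma qv_le_one (G : SimpleGraph V) {α : ℝ} (h0 : 0 ≤ α) (h1 : α ≤ 1) (u : V) (c : V → Bool) :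
    qv G α u c ≤ 1 := by
  have h2 := majorityProb_le_one G c u
  have h3 := majorityProb_nonneg G c u
  unfold qv; nlinarith

noncomputable def cfg : List (V × Bool) → V → Bool
  | [] => fun _ => false
  | p :: r => Function.update (cfg r) p.1 p.2

noncomputable def Cv (G : SimpleGraph V) : List (V × Bool) → V → Bool
  | [] => fun _ => false
  | p :: r => fun v => if v = p.1 then
      (p.2 && decide (2 * ((G.neighborFinset p.1).filter (fun w => cfg r w = true)).card
          < G.degree p.1))
    else Cv G r v

noncomputable def cfgs : List (V × Bool) → List (V → Bool)
  | [] => [fun _ => false]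
  | p :: r => cfg (p :: r) :: cfgs r

lemma cfgs_head (r : List (V × Bool)) : (cfgs r).headI = cfg r := by
  cases r with
  | nil => rfl
  | cons p r => simp [cfgs]

lemma cfgs_eq_map_tails (r : List (V × Bool)) : cfgs r = r.tails.map cfg := by
  induction r with
  | nil => rfl
  | cons p r ih => simp [cfgs, List.tails, ih]

def badU (G : SimpleGraph V) (u : V) (r : List (V × Bool)) : Prop :=
  G.degree u ≤ 2 * ((G.neighborFinset u).filter (fun v => Cv G r v = true)).card

noncomputable def EW (G : SimpleGraph V) (α : ℝ) :
    ℕ → (List (V → Bool) → ℝ) → List (V → Bool) → ℝ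
  | 0, F, h => F h
  | k+1, F, h => ∑ c' : V → Bool, stepProb G α h.headI c' * EW G α k F (c' :: h)

noncomputable def EWr (G : SimpleGraph V) (α : ℝ) :
    ℕ → (List (V × Bool) → ℝ) → List (V × Bool) → ℝ
  | 0, F, r => F r
  | k+1, F, r => ((Fintype.card V : ℝ))⁻¹ *
      ∑ u : V, (qv G α u (cfg r) * EWr G α k F ((u, true) :: r)
        + (1 - qv G α u (cfg r)) * EWr G α k F ((u, false) :: r))



section EWrLemmas
variable (G : SimpleGraph V) {α : ℝ}

lemma EWr_zero_fun (k : ℕ) (r : List (V × Bool)) :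
    EWr G α k (fun _ => 0) r = 0 := by
  induction k generalizing r with
  | zero => rfl
  | succ k ih => simp [EWr, ih]

lemma EWr_mono (h0 : 0 ≤ α) (h1 : α ≤ 1) (k : ℕ) :
    ∀ (r : List (V × Bool)) (F₁ F₂ : List (V × Bool) → ℝ),
      (∀ l, l.length = k + r.length → F₁ l ≤ F₂ l) → EWr G α k F₁ r ≤ EWr G α k F₂ r := by
  induction k with
  | zero => intro r F₁ F₂ h; exact h r (by simp)
  | succ k ih =>
    intro r F₁ F₂ h
    have hq : ∀ u, 0 ≤ qv G α u (cfg r) := fun u => qv_nonneg G h0 h1 u (cfg r)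
    have hq1 : ∀ u, qv G α u (cfg r) ≤ 1 := fun u => qv_le_one G h0 h1 u (cfg r)
    unfold EWr
    apply mul_le_mul_of_nonneg_left _ (by positivity)
    apply Finset.sum_le_sum
    intro u _
    have h1' : ∀ b : Bool, EWr G α k F₁ ((u, b) :: r) ≤ EWr G α k F₂ ((u, b) :: r) := by
      intro b
      apply ih ((u, b) :: r)
      intro l hl
      apply h l (by simp at hl ⊢; omega)
    apply add_le_add
    · exact mul_le_mul_of_nonneg_left (h1' true) (hq u)
    · exact mul_le_mul_of_nonneg_left (h1' false) (by linarith [hq1 u])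

lemma EWr_nonneg (h0 : 0 ≤ α) (h1 : α ≤ 1) (k : ℕ) (r : List (V × Bool))
    (F : List (V × Bool) → ℝ) (hF : ∀ l, 0 ≤ F l) : 0 ≤ EWr G α k F r := by
  have := EWr_mono G h0 h1 k r (fun _ => 0) F (fun l _ => hF l)
  rwa [EWr_zero_fun] at this

lemma EWr_add (k : ℕ) (r : List (V × Bool)) (F₁ F₂ : List (V × Bool) → ℝ) :
    EWr G α k (fun l => F₁ l + F₂ l) r = EWr G α k F₁ r + EWr G α k F₂ r := by
  induction k generalizing r with
  | zero => rfl
  | succ k ih =>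
    simp only [EWr, ih]
    rw [← mul_add, ← Finset.sum_add_distrib]
    congr 1
    apply Finset.sum_congr rfl
    intro u _
    ring

lemma EWr_smul (k : ℕ) (r : List (V × Bool)) (c : ℝ) (F : List (V × Bool) → ℝ) :
    EWr G α k (fun l => c * F l) r = c * EWr G α k F r := by
  induction k generalizing r with
  | zero => rfl
  | succ k ih =>
    simp only [EWr, ih]
    rw [Finset.mul_sum, Finset.mul_sum, Finset.mul_sum]
    apply Finset.sum_congr rfl
    intro u _
    ring

lemma EWr_sum {ι : Type*} (k : ℕ) (r : List (V × Bool)) (s : Finset ι)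
    (F : ι → List (V × Bool) → ℝ) :
    EWr G α k (fun l => ∑ i ∈ s, F i l) r = ∑ i ∈ s, EWr G α k (F i) r := by
  classical
  induction s using Finset.induction_on with
  | empty => simpa using EWr_zero_fun G k r
  | insert _ _ hnotmem ih =>
    rw [Finset.sum_insert hnotmem]
    rw [← ih, ← EWr_add]
    congr 1
    funext l
    rw [Finset.sum_insert hnotmem]

lemma EWr_one (hn : (Fintype.card V : ℝ) ≠ 0) (k : ℕ) (r : List (V × Bool)) :
    EWr G α k (fun _ => 1) r = 1 := by
  induction k generalizing r with
  | zero => rfl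
  | succ k ih =>
    unfold EWr
    simp only [ih]
    have : ∀ u : V, qv G α u (cfg r) * 1 + (1 - qv G α u (cfg r)) * 1 = 1 := by intro u; ring
    rw [Finset.sum_congr rfl (fun u _ => this u), Finset.sum_const, Finset.card_univ,
      nsmul_eq_mul, mul_one, inv_mul_cancel₀ hn]

noncomputable def StepF (α : ℝ) (F : List (V × Bool) → ℝ) (l : List (V × Bool)) : ℝ :=
  ((Fintype.card V : ℝ))⁻¹ *
    ∑ u : V, (qv G α u (cfg l) * F ((u, true) :: l) + (1 - qv G α u (cfg l)) * F ((u, false) :: l))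

lemma EWr_succ_eq (k : ℕ) (F : List (V × Bool) → ℝ) (r : List (V × Bool)) :
    EWr G α (k + 1) F r = EWr G α k (StepF G α F) r := by
  induction k generalizing r with
  | zero => rfl
  | succ k ih =>
    show ((Fintype.card V : ℝ))⁻¹ * ∑ u : V, _ = ((Fintype.card V : ℝ))⁻¹ * ∑ u : V, _
    congr 1
    apply Finset.sum_congr rfl
    intro u _
    rw [ih, ih]

lemma EWr_drop_one (hn : (Fintype.card V : ℝ) ≠ 0) (k : ℕ) (F : List (V × Bool) → ℝ) (r : List (V × Bool)) :
    EWr G α (k + 1) (fun l => F (l.drop 1)) r = EWr G α k F r := by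
  induction k generalizing r with
  | zero =>
    simp only [EWr, List.drop_succ_cons, List.drop_zero]
    have : ∀ u : V, qv G α u (cfg r) * F r + (1 - qv G α u (cfg r)) * F r = F r := by
      intro u; ring
    rw [Finset.sum_congr rfl (fun u _ => this u), Finset.sum_const, Finset.card_univ,
      nsmul_eq_mul, ← mul_assoc, inv_mul_cancel₀ hn, one_mul]
  | succ k ih =>
    show ((Fintype.card V : ℝ))⁻¹ * ∑ u : V, _ = ((Fintype.card V : ℝ))⁻¹ * ∑ u : V, _
    congr 1
    apply Finset.sum_congr rfl
    intro u _
    rw [ih, ih]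

lemma EWr_drop (hn : (Fintype.card V : ℝ) ≠ 0) (k i : ℕ) (hik : i ≤ k) (F : List (V × Bool) → ℝ) (r : List (V × Bool)) :
    EWr G α k (fun l => F (l.drop i)) r = EWr G α (k - i) F r := by
  induction i generalizing k F with
  | zero => simp
  | succ i ih =>
    obtain ⟨k', rfl⟩ : ∃ k', k = k' + 1 := ⟨k - 1, by omega⟩
    have h1 : (fun l : List (V × Bool) => F (l.drop (i + 1)))
        = fun l => F ((l.drop 1).drop i) := by
      funext l
      rw [List.drop_drop, Nat.add_comm]
    rw [h1]
    have h2 := EWr_drop_one G (α := α) hn k' (fun m => F (m.drop i)) r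
    have h3 : k' + 1 - (i + 1) = k' - i := by omega
    rw [h2, ih k' (by omega) F, h3]

end EWrLemmas


section MGF
variable (G : SimpleGraph V) {α : ℝ}

lemma Cv_nil (v : V) : Cv G ([] : List (V × Bool)) v = false := rfl

lemma Cv_cons_ne (p : V × Bool) (r : List (V × Bool)) {v : V} (h : v ≠ p.1) :
    Cv G (p :: r) v = Cv G r v := by
  simp [Cv, h]

lemma Cv_cons_self (p : V × Bool) (r : List (V × Bool)) :
    Cv G (p :: r) p.1 = (p.2 && decide (2 * ((G.neighborFinset p.1).filter
      (fun w => cfg r w = true)).card < G.degree p.1)) := by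
  simp [Cv]

lemma StepF_prod_le (hα0 : 0 < α) (hα2 : α ≤ 1/2) (S : Finset V) (l : List (V × Bool)) :
    StepF G α (fun m => ∏ v ∈ S, ((1 - α)/α) ^ (if Cv G m v = true then 1 else 0)) l
      ≤ (Fintype.card V : ℝ)⁻¹ *
        (((Fintype.card V : ℝ) - S.card) *
            (∏ v ∈ S, ((1 - α)/α) ^ (if Cv G l v = true then 1 else 0))
          + (2 * (1 - α)) * ∑ u ∈ S, ∏ v ∈ S.erase u,
              ((1 - α)/α) ^ (if Cv G l v = true then 1 else 0)) := by
  have hα1 : α < 1 := by linarith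
  have hγ0 : (0:ℝ) ≤ (1 - α)/α := div_nonneg (by linarith) (le_of_lt hα0)
  have hβ1 : (1:ℝ) ≤ 2 * (1 - α) := by linarith
  set γ : ℝ := (1 - α)/α with hγ
  set β : ℝ := 2 * (1 - α) with hβ
  unfold StepF
  beta_reduce
  apply mul_le_mul_of_nonneg_left _ (by positivity)
  rw [← Finset.sum_add_sum_compl S, add_comm]
  have hQ : ∀ u : V, (0:ℝ) ≤ ∏ v ∈ S.erase u, γ ^ (if Cv G l v = true then 1 else 0) := by
    intro u; apply Finset.prod_nonneg; intro v _; positivity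
  apply add_le_add
  · -- complement part
    have heq : ∀ u ∈ Sᶜ, (qv G α u (cfg l) *
          (∏ v ∈ S, γ ^ (if Cv G ((u, true) :: l) v = true then 1 else 0))
        + (1 - qv G α u (cfg l)) *
          (∏ v ∈ S, γ ^ (if Cv G ((u, false) :: l) v = true then 1 else 0)))
        = ∏ v ∈ S, γ ^ (if Cv G l v = true then 1 else 0) := by
      intro u hu
      have hS : u ∉ S := by simpa using hu
      have hprod : ∀ b : Bool, (∏ v ∈ S, γ ^ (if Cv G ((u, b) :: l) v = true then 1 else 0))
          = ∏ v ∈ S, γ ^ (if Cv G l v = true then 1 else 0) := by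
        intro b
        apply Finset.prod_congr rfl
        intro v hv
        rw [Cv_cons_ne G (u, b) l (by intro h; rw [h] at hv; exact hS hv)]
      rw [hprod, hprod]; ring
    rw [Finset.sum_congr rfl heq, Finset.sum_const, Finset.card_compl, nsmul_eq_mul]
    apply mul_le_mul_of_nonneg_right
    · rw [Nat.cast_sub (Finset.card_le_univ S)]
    · apply Finset.prod_nonneg; intro v _; positivity
  · -- part over S
    rw [Finset.mul_sum]
    apply Finset.sum_le_sum
    intro u huS
    have hsplit : ∀ b : Bool, (∏ v ∈ S, γ ^ (if Cv G ((u, b) :: l) v = true then 1 else 0))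
        = (γ ^ (if Cv G ((u, b) :: l) u = true then 1 else 0)) *
          ∏ v ∈ S.erase u, γ ^ (if Cv G l v = true then 1 else 0) := by
      intro b
      rw [← Finset.mul_prod_erase S _ huS]
      congr 1
      apply Finset.prod_congr rfl
      intro v hv
      rw [Cv_cons_ne G (u, b) l (Finset.ne_of_mem_erase hv)]
    rw [hsplit, hsplit]
    have hfalse : Cv G ((u, false) :: l) u = false := by
      rw [Cv_cons_self]; simp
    have htrue : Cv G ((u, true) :: l) u
        = decide (2 * ((G.neighborFinset u).filter (fun w => cfg l w = true)).card
            < G.degree u) := by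
      rw [Cv_cons_self]; simp
    by_cases hc : 2 * ((G.neighborFinset u).filter (fun w => cfg l w = true)).card < G.degree u
    · have hqv : qv G α u (cfg l) = α := by
        unfold qv; rw [majorityProb_eq_zero G (cfg l) u hc]; ring
      have he1 : (γ ^ (if Cv G ((u, true) :: l) u = true then 1 else 0)) = γ := by
        rw [htrue]; simp [hc]
      have he0 : (γ ^ (if Cv G ((u, false) :: l) u = true then 1 else 0)) = 1 := by
        rw [hfalse]; simp
      rw [hqv, he1, he0]
      set Q := ∏ v ∈ S.erase u, γ ^ (if Cv G l v = true then 1 else 0) with hQdef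
      have key : α * γ + (1 - α) = β := by rw [hβ, hγ]; field_simp; ring
      have heq : α * (γ * Q) + (1 - α) * (1 * Q) = (α * γ + (1 - α)) * Q := by ring
      rw [heq, key]
    · have he1 : (γ ^ (if Cv G ((u, true) :: l) u = true then 1 else 0)) = 1 := by
        rw [htrue]; simp [hc]
      have he0 : (γ ^ (if Cv G ((u, false) :: l) u = true then 1 else 0)) = 1 := by
        rw [hfalse]; simp
      rw [he1, he0]
      set Q := ∏ v ∈ S.erase u, γ ^ (if Cv G l v = true then 1 else 0) with hQdef
      have heq : qv G α u (cfg l) * (1 * Q) + (1 - qv G α u (cfg l)) * (1 * Q) = 1 * Q := by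
        ring
      rw [heq]
      exact mul_le_mul_of_nonneg_right hβ1 (hQ u)

lemma MGF [Nonempty V] (hα0 : 0 < α) (hα2 : α ≤ 1/2) (k : ℕ) :
    ∀ S : Finset V,
      EWr G α k (fun l => ∏ v ∈ S, ((1 - α)/α) ^ (if Cv G l v = true then 1 else 0))
          ([] : List (V × Bool))
        ≤ (2 * (1 - α)) ^ S.card := by
  have hn : (0:ℝ) < (Fintype.card V : ℝ) := by
    have := Fintype.card_pos (α := V); positivity
  have hα1 : α < 1 := by linarith
  have hγ0 : (0:ℝ) ≤ (1 - α)/α := div_nonneg (by linarith) (le_of_lt hα0)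
  have hβ1 : (1:ℝ) ≤ 2 * (1 - α) := by linarith
  induction k with
  | zero =>
    intro S
    show (∏ v ∈ S, ((1 - α)/α) ^ (if Cv G [] v = true then 1 else 0)) ≤ _
    have : (∏ v ∈ S, ((1 - α)/α) ^ (if Cv G ([] : List (V × Bool)) v = true then 1 else 0)) = 1 := by
      apply Finset.prod_eq_one
      intro v _
      rw [Cv_nil]; simp
    rw [this]
    exact one_le_pow₀ hβ1
  | succ k ih =>
    intro S
    rw [EWr_succ_eq]
    have step1 : EWr G α k (StepF G α
          (fun l => ∏ v ∈ S, ((1 - α)/α) ^ (if Cv G l v = true then 1 else 0))) []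
        ≤ EWr G α k (fun l => (Fintype.card V : ℝ)⁻¹ *
            (((Fintype.card V : ℝ) - S.card) *
              (∏ v ∈ S, ((1 - α)/α) ^ (if Cv G l v = true then 1 else 0))
            + (2 * (1 - α)) * ∑ u ∈ S, ∏ v ∈ S.erase u,
                ((1 - α)/α) ^ (if Cv G l v = true then 1 else 0))) [] := by
      apply EWr_mono G (le_of_lt hα0) (le_of_lt hα1) k []
      intro l _
      exact StepF_prod_le G hα0 hα2 S l
    apply le_trans step1
    rw [show (fun l : List (V × Bool) => (Fintype.card V : ℝ)⁻¹ *
            (((Fintype.card V : ℝ) - S.card) *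
              (∏ v ∈ S, ((1 - α)/α) ^ (if Cv G l v = true then 1 else 0))
            + (2 * (1 - α)) * ∑ u ∈ S, ∏ v ∈ S.erase u,
                ((1 - α)/α) ^ (if Cv G l v = true then 1 else 0)))
      = (fun l : List (V × Bool) => (Fintype.card V : ℝ)⁻¹ *
            (((Fintype.card V : ℝ) - S.card) *
              (∏ v ∈ S, ((1 - α)/α) ^ (if Cv G l v = true then 1 else 0))
            + (2 * (1 - α)) * ∑ u ∈ S, ∏ v ∈ S.erase u,
                ((1 - α)/α) ^ (if Cv G l v = true then 1 else 0))) from rfl]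
    rw [EWr_smul]
    have hdecomp : EWr G α k (fun l =>
        ((Fintype.card V : ℝ) - S.card) *
          (∏ v ∈ S, ((1 - α)/α) ^ (if Cv G l v = true then 1 else 0))
        + (2 * (1 - α)) * ∑ u ∈ S, ∏ v ∈ S.erase u,
            ((1 - α)/α) ^ (if Cv G l v = true then 1 else 0)) []
      = ((Fintype.card V : ℝ) - S.card) *
          EWr G α k (fun l => ∏ v ∈ S, ((1 - α)/α) ^ (if Cv G l v = true then 1 else 0)) []
        + (2 * (1 - α)) * ∑ u ∈ S,
            EWr G α k (fun l => ∏ v ∈ S.erase u,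
              ((1 - α)/α) ^ (if Cv G l v = true then 1 else 0)) [] := by
      rw [EWr_add, EWr_smul, EWr_smul, EWr_sum]
    rw [hdecomp]
    have hcard : (S.card : ℝ) ≤ (Fintype.card V : ℝ) := by
      exact_mod_cast Finset.card_le_univ S
    have hterm : ∀ u ∈ S, EWr G α k (fun l => ∏ v ∈ S.erase u,
          ((1 - α)/α) ^ (if Cv G l v = true then 1 else 0)) [] ≤ (2*(1-α)) ^ (S.card - 1) := by
      intro u hu
      have := ih (S.erase u)
      rwa [Finset.card_erase_of_mem hu] at this
    have hsum : ∑ u ∈ S, EWr G α k (fun l => ∏ v ∈ S.erase u,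
          ((1 - α)/α) ^ (if Cv G l v = true then 1 else 0)) []
        ≤ (S.card : ℝ) * (2*(1-α)) ^ (S.card - 1) := by
      calc _ ≤ ∑ _u ∈ S, (2*(1-α)) ^ (S.card - 1) := Finset.sum_le_sum hterm
        _ = (S.card : ℝ) * (2*(1-α)) ^ (S.card - 1) := by
            rw [Finset.sum_const, nsmul_eq_mul]
    have hbig : ((Fintype.card V : ℝ) - S.card) *
          EWr G α k (fun l => ∏ v ∈ S, ((1 - α)/α) ^ (if Cv G l v = true then 1 else 0)) []
        + (2 * (1 - α)) * ∑ u ∈ S,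
            EWr G α k (fun l => ∏ v ∈ S.erase u,
              ((1 - α)/α) ^ (if Cv G l v = true then 1 else 0)) []
        ≤ ((Fintype.card V : ℝ) - S.card) * (2*(1-α)) ^ S.card
          + (2 * (1 - α)) * ((S.card : ℝ) * (2*(1-α)) ^ (S.card - 1)) := by
      apply add_le_add
      · exact mul_le_mul_of_nonneg_left (ih S) (by linarith)
      · exact mul_le_mul_of_nonneg_left hsum (by linarith)
    calc (Fintype.card V : ℝ)⁻¹ * _ ≤ (Fintype.card V : ℝ)⁻¹ *
          (((Fintype.card V : ℝ) - S.card) * (2*(1-α)) ^ S.card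
            + (2 * (1 - α)) * ((S.card : ℝ) * (2*(1-α)) ^ (S.card - 1))) := by
          exact mul_le_mul_of_nonneg_left hbig (by positivity)
      _ = (2*(1-α)) ^ S.card := by
          have hkey : (2 * (1 - α)) * ((S.card : ℝ) * (2*(1-α)) ^ (S.card - 1))
              = (S.card : ℝ) * (2*(1-α)) ^ S.card := by
            rcases Nat.eq_zero_or_pos S.card with h | h
            · rw [h]; simp
            · obtain ⟨c, hc⟩ : ∃ c, S.card = c + 1 := ⟨S.card - 1, by omega⟩
              rw [hc]
              simp only [Nat.add_sub_cancel]
              rw [pow_succ]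
              ring
          rw [hkey]
          field_simp
          ring

end MGF


section Chernoff
variable (G : SimpleGraph V) {α : ℝ}

lemma badU_bound [Nonempty V] (hα0 : 0 < α) {ε : ℝ} (hε0 : 0 < ε) (hε1 : ε < 1)
    (hαε : α ≤ (1 - ε)/2) (Δ : ℕ) (hΔ : ∀ v : V, Δ ≤ G.degree v) (u : V) (k : ℕ) :
    EWr G α k (fun l => if badU G u l then (1:ℝ) else 0) ([] : List (V × Bool))
      ≤ Real.exp (-(ε^2 * Δ / 6)) := by
  have hα2 : α ≤ 1/2 := by linarith
  have hα1 : α < 1 := by linarith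
  set γ : ℝ := (1 - α)/α with hγ
  set β : ℝ := 2 * (1 - α) with hβ
  have hγ1 : (1:ℝ) ≤ γ := by
    rw [hγ, le_div_iff₀ hα0]; linarith
  have hγ0 : (0:ℝ) ≤ γ := by linarith
  set lam : ℝ := Real.sqrt γ with hlam
  have hlam1 : (1:ℝ) ≤ lam := by
    rw [hlam, show (1:ℝ) = Real.sqrt 1 by simp]
    exact Real.sqrt_le_sqrt hγ1
  have hlam0 : (0:ℝ) < lam := by linarith
  have hlamsq : lam ^ 2 = γ := Real.sq_sqrt hγ0
  set d : ℕ := G.degree u with hd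
  have hpow : ∀ l : List (V × Bool),
      (if badU G u l then (1:ℝ) else 0)
        ≤ (lam ^ d)⁻¹ * ∏ v ∈ G.neighborFinset u, γ ^ (if Cv G l v = true then 1 else 0) := by
    intro l
    have hprod : (∏ v ∈ G.neighborFinset u, γ ^ (if Cv G l v = true then 1 else 0))
        = γ ^ (((G.neighborFinset u).filter (fun v => Cv G l v = true)).card) := by
      rw [Finset.prod_pow_eq_pow_sum]
      congr 1
      rw [Finset.card_filter]
    by_cases hb : badU G u l
    · rw [if_pos hb, hprod]
      have h2K : d ≤ 2 * ((G.neighborFinset u).filter (fun v => Cv G l v = true)).card := hb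
      have : lam ^ d ≤ γ ^ (((G.neighborFinset u).filter (fun v => Cv G l v = true)).card) := by
        calc lam ^ d ≤ lam ^ (2 * ((G.neighborFinset u).filter (fun v => Cv G l v = true)).card) :=
              pow_le_pow_right₀ hlam1 h2K
          _ = (lam ^ 2) ^ (((G.neighborFinset u).filter (fun v => Cv G l v = true)).card) := by
              rw [← pow_mul]
          _ = _ := by rw [hlamsq]
      calc (1:ℝ) = (lam ^ d)⁻¹ * lam ^ d := by
            rw [inv_mul_cancel₀ (ne_of_gt (pow_pos hlam0 d))]
        _ ≤ (lam ^ d)⁻¹ * γ ^ (((G.neighborFinset u).filter (fun v => Cv G l v = true)).card) :=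
            mul_le_mul_of_nonneg_left this (by positivity)
    · rw [if_neg hb]
      positivity
  have step1 : EWr G α k (fun l => if badU G u l then (1:ℝ) else 0) []
      ≤ EWr G α k (fun l => (lam ^ d)⁻¹ *
          ∏ v ∈ G.neighborFinset u, γ ^ (if Cv G l v = true then 1 else 0)) [] :=
    EWr_mono G (le_of_lt hα0) (le_of_lt hα1) k [] _ _ (fun l _ => hpow l)
  have step2 : EWr G α k (fun l => (lam ^ d)⁻¹ *
        ∏ v ∈ G.neighborFinset u, γ ^ (if Cv G l v = true then 1 else 0)) []
      = (lam ^ d)⁻¹ * EWr G α k (fun l =>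
          ∏ v ∈ G.neighborFinset u, γ ^ (if Cv G l v = true then 1 else 0)) [] :=
    EWr_smul G k [] _ _
  have step3 : EWr G α k (fun l =>
        ∏ v ∈ G.neighborFinset u, γ ^ (if Cv G l v = true then 1 else 0)) []
      ≤ β ^ d := by
    have := MGF G hα0 hα2 k (G.neighborFinset u)
    rwa [SimpleGraph.card_neighborFinset_eq_degree] at this
  have hfinal : (lam ^ d)⁻¹ * β ^ d ≤ Real.exp (-(ε^2 * Δ / 6)) := by
    have hβ0 : (0:ℝ) ≤ β := by linarith
    have hratio : β / lam ≤ Real.exp (-(ε^2/6)) := by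
      have hsq : (β / lam) ^ 2 = 4 * α * (1 - α) := by
        have hαne : α ≠ 0 := ne_of_gt hα0
        have h1αne : (1 - α) ≠ 0 := by intro h; rw [sub_eq_zero] at h; linarith
        rw [div_pow, hlamsq, hβ, hγ]
        field_simp
        ring
      have h1 : 4 * α * (1 - α) ≤ 1 - ε^2 := by nlinarith
      have h2 : 1 - ε^2 ≤ Real.exp (-(ε^2/3)) := by
        have := Real.add_one_le_exp (-(ε^2))
        have h3 : Real.exp (-(ε^2)) ≤ Real.exp (-(ε^2/3)) := by
          apply Real.exp_le_exp.mpr; nlinarith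
        linarith
      have h4 : (β / lam) ^ 2 ≤ (Real.exp (-(ε^2/6))) ^ 2 := by
        have hexp2 : (Real.exp (-(ε^2/6))) ^ 2 = Real.exp (-(ε^2/3)) := by
          rw [← Real.exp_nat_mul]
          congr 1
          push_cast
          ring
        rw [hsq, hexp2]
        linarith
      have h5 : 0 ≤ β / lam := by positivity
      calc β / lam = Real.sqrt ((β / lam)^2) := (Real.sqrt_sq h5).symm
        _ ≤ Real.sqrt ((Real.exp (-(ε^2/6)))^2) := Real.sqrt_le_sqrt h4
        _ = Real.exp (-(ε^2/6)) := Real.sqrt_sq (le_of_lt (Real.exp_pos _))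
    calc (lam ^ d)⁻¹ * β ^ d = (β / lam) ^ d := by
          rw [div_pow, div_eq_inv_mul]
      _ ≤ (Real.exp (-(ε^2/6))) ^ d := pow_le_pow_left₀ (by positivity) hratio d
      _ = Real.exp (d * (-(ε^2/6))) := (Real.exp_nat_mul _ d).symm
      _ ≤ Real.exp (-(ε^2 * Δ / 6)) := by
          apply Real.exp_le_exp.mpr
          have hdΔ : (Δ:ℝ) ≤ (d:ℝ) := by exact_mod_cast hΔ u
          nlinarith [sq_nonneg ε]
  calc EWr G α k (fun l => if badU G u l then (1:ℝ) else 0) []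
      ≤ (lam ^ d)⁻¹ * EWr G α k (fun l =>
          ∏ v ∈ G.neighborFinset u, γ ^ (if Cv G l v = true then 1 else 0)) [] := by
        rw [← step2]; exact step1
    _ ≤ (lam ^ d)⁻¹ * β ^ d := by
        apply mul_le_mul_of_nonneg_left step3 (by positivity)
    _ ≤ Real.exp (-(ε^2 * Δ / 6)) := hfinal

end Chernoff


section Combinatorial
variable (G : SimpleGraph V)

lemma cfg_cons (p : V × Bool) (l : List (V × Bool)) :
    cfg (p :: l) = Function.update (cfg l) p.1 p.2 := rfl

lemma lemM (l : List (V × Bool)) :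
    (∀ m ∈ l.tails, ¬ ∃ u, badU G u m) → ∀ v, cfg l v = true → Cv G l v = true := by
  induction l with
  | nil =>
    intro _ v hv
    exact absurd hv (by simp [cfg])
  | cons p l ih =>
    intro h v hv
    have hsub : ∀ m ∈ l.tails, ¬ ∃ u, badU G u m := by
      intro m hm
      exact h m (by rw [List.tails_cons]; exact List.mem_cons_of_mem _ hm)
    by_cases hvp : v = p.1
    · have hcfg : cfg (p :: l) v = p.2 := by
        rw [cfg_cons, hvp, Function.update_self]
      have hp2 : p.2 = true := by rw [← hcfg]; exact hv
      rw [hvp, Cv_cons_self, hp2, Bool.true_and, decide_eq_true_eq]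
      by_contra hc
      push_neg at hc
      apply h l (by rw [List.tails_cons]
                    exact List.mem_cons_of_mem _ ((List.mem_tails l l).mpr (List.suffix_refl l)))
      refine ⟨p.1, ?_⟩
      unfold badU
      calc G.degree p.1 ≤ 2 * ((G.neighborFinset p.1).filter (fun w => cfg l w = true)).card := hc
        _ ≤ 2 * ((G.neighborFinset p.1).filter (fun w => Cv G l w = true)).card := by
            apply Nat.mul_le_mul_left
            apply Finset.card_le_card
            intro x hx
            rw [Finset.mem_filter] at hx ⊢
            exact ⟨hx.1, ih hsub x hx.2⟩
    · rw [Cv_cons_ne G p l hvp]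
      apply ih hsub v
      rwa [cfg_cons, Function.update_of_ne hvp] at hv

lemma hit_exists [Nonempty V] (l : List (V × Bool))
    (h : (fun _ => true : V → Bool) ∈ cfgs l) :
    ∃ m ∈ l.tails, ∃ u, badU G u m := by
  by_contra hno
  rw [cfgs_eq_map_tails, List.mem_map] at h
  obtain ⟨m, hm, hcfg⟩ := h
  have hmsuf : m <:+ l := (List.mem_tails m l).mp hm
  have hCv : ∀ v, Cv G m v = true := by
    intro v
    apply lemM G m ?_ v (by rw [hcfg])
    intro m' hm' hex
    obtain ⟨u, hu⟩ := hex
    have hm'l : m' ∈ l.tails :=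
      (List.mem_tails m' l).mpr (((List.mem_tails m' m).mp hm').trans hmsuf)
    exact hno ⟨m', hm'l, u, hu⟩
  obtain ⟨u⟩ := (inferInstance : Nonempty V)
  apply hno
  refine ⟨m, hm, u, ?_⟩
  show G.degree u ≤ 2 * ((G.neighborFinset u).filter (fun v => Cv G m v = true)).card
  have hfil : (G.neighborFinset u).filter (fun v => Cv G m v = true) = G.neighborFinset u := by
    apply Finset.filter_true_of_mem
    intro v _
    exact hCv v
  rw [hfil, SimpleGraph.card_neighborFinset_eq_degree]
  omega

lemma card_true_le (l : List (V × Bool)) :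
    ((Finset.univ : Finset V).filter (fun v => cfg l v = true)).card ≤ l.length := by
  induction l with
  | nil => simp [cfg]
  | cons p l ih =>
    have hsub : (Finset.univ.filter (fun v => cfg (p :: l) v = true))
        ⊆ insert p.1 (Finset.univ.filter (fun v => cfg l v = true)) := by
      intro v hv
      rw [Finset.mem_filter] at hv
      rw [Finset.mem_insert]
      by_cases hvp : v = p.1
      · exact Or.inl hvp
      · refine Or.inr ?_
        rw [Finset.mem_filter]
        refine ⟨Finset.mem_univ v, ?_⟩
        have := hv.2
        rwa [cfg_cons, Function.update_of_ne hvp] at this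
    calc ((Finset.univ : Finset V).filter (fun v => cfg (p :: l) v = true)).card
        ≤ (insert p.1 (Finset.univ.filter (fun v => cfg l v = true))).card :=
          Finset.card_le_card hsub
      _ ≤ (Finset.univ.filter (fun v => cfg l v = true)).card + 1 := Finset.card_insert_le _ _
      _ ≤ l.length + 1 := by omega
      _ = (p :: l).length := by simp

lemma not_hit (l : List (V × Bool)) (hlen : l.length < Fintype.card V) :
    (fun _ => true : V → Bool) ∉ cfgs l := by
  intro h
  rw [cfgs_eq_map_tails, List.mem_map] at h
  obtain ⟨m, hm, hcfg⟩ := h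
  have h1 : (Finset.univ : Finset V).filter (fun v => cfg m v = true) = Finset.univ := by
    apply Finset.filter_true_of_mem
    intro v _
    rw [hcfg]
  have h2 := card_true_le (V := V) m
  rw [h1, Finset.card_univ] at h2
  have h3 : m.length ≤ l.length := ((List.mem_tails m l).mp hm).length_le
  omega

lemma hit_pointwise [Nonempty V] (t : ℕ) (l : List (V × Bool)) (hl : l.length = t) :
    (if (fun _ => true : V → Bool) ∈ cfgs l then (1:ℝ) else 0)
      ≤ ∑ i ∈ Finset.range (t+1), ∑ u : V, (if badU G u (l.drop i) then (1:ℝ) else 0) := by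
  have hnn : ∀ i ∈ Finset.range (t+1),
      (0:ℝ) ≤ ∑ u : V, (if badU G u (l.drop i) then (1:ℝ) else 0) := by
    intro i _
    apply Finset.sum_nonneg
    intro u _
    split_ifs <;> norm_num
  by_cases h : (fun _ => true : V → Bool) ∈ cfgs l
  · rw [if_pos h]
    obtain ⟨m, hm, u, hu⟩ := hit_exists G l h
    obtain ⟨pre, hpre⟩ := (List.mem_tails m l).mp hm
    have hdrop : l.drop pre.length = m := by
      rw [← hpre, List.drop_left]
    have hi : pre.length ∈ Finset.range (t+1) := by
      rw [Finset.mem_range]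
      have : pre.length ≤ l.length := by
        rw [← hpre]; simp
      omega
    calc (1:ℝ) ≤ ∑ u' : V, (if badU G u' (l.drop pre.length) then (1:ℝ) else 0) := by
          have hle : (1:ℝ) ≤ (if badU G u (l.drop pre.length) then (1:ℝ) else 0) := by
            rw [hdrop, if_pos hu]
          calc (1:ℝ) ≤ _ := hle
            _ ≤ _ := Finset.single_le_sum (f := fun u' => if badU G u' (l.drop pre.length)
                then (1:ℝ) else 0) (fun u' _ => by split_ifs <;> norm_num) (Finset.mem_univ u)
      _ ≤ _ := Finset.single_le_sum hnn hi
  · rw [if_neg h]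
    exact Finset.sum_nonneg hnn

end Combinatorial


section HitBound
variable (G : SimpleGraph V) {α : ℝ}

lemma hit_bound [Nonempty V] (hα0 : 0 < α) {ε : ℝ} (hε0 : 0 < ε) (hε1 : ε < 1)
    (hαε : α ≤ (1 - ε)/2) (Δ : ℕ) (hΔ : ∀ v : V, Δ ≤ G.degree v) (t : ℕ) :
    EWr G α t (fun l => if (fun _ => true : V → Bool) ∈ cfgs l then (1:ℝ) else 0)
        ([] : List (V × Bool))
      ≤ (t+1) * (Fintype.card V) * Real.exp (-(ε^2 * Δ / 6)) := by
  have hα1 : α < 1 := by linarith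
  have hn : (Fintype.card V : ℝ) ≠ 0 := by
    have := Fintype.card_pos (α := V)
    positivity
  have step1 : EWr G α t (fun l => if (fun _ => true : V → Bool) ∈ cfgs l then (1:ℝ) else 0) []
      ≤ EWr G α t (fun l => ∑ i ∈ Finset.range (t+1), ∑ u : V,
          (if badU G u (l.drop i) then (1:ℝ) else 0)) [] := by
    apply EWr_mono G (le_of_lt hα0) (le_of_lt hα1) t []
    intro l hl
    apply hit_pointwise G t l
    simpa using hl
  apply le_trans step1
  rw [EWr_sum]
  have step2 : ∀ i ∈ Finset.range (t+1),
      EWr G α t (fun l => ∑ u : V, (if badU G u (l.drop i) then (1:ℝ) else 0)) []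
        ≤ (Fintype.card V : ℝ) * Real.exp (-(ε^2 * Δ / 6)) := by
    intro i hi
    rw [EWr_sum]
    have hile : i ≤ t := by rw [Finset.mem_range] at hi; omega
    have : ∀ u : V, EWr G α t (fun l => if badU G u (l.drop i) then (1:ℝ) else 0) []
        ≤ Real.exp (-(ε^2 * Δ / 6)) := by
      intro u
      rw [EWr_drop G (α := α) hn t i hile (fun m => if badU G u m then (1:ℝ) else 0) []]
      exact badU_bound G hα0 hε0 hε1 hαε Δ hΔ u (t - i)
    calc ∑ u : V, EWr G α t (fun l => if badU G u (l.drop i) then (1:ℝ) else 0) []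
        ≤ ∑ _u : V, Real.exp (-(ε^2 * Δ / 6)) := Finset.sum_le_sum (fun u _ => this u)
      _ = (Fintype.card V : ℝ) * Real.exp (-(ε^2 * Δ / 6)) := by
          rw [Finset.sum_const, Finset.card_univ, nsmul_eq_mul]
  calc ∑ i ∈ Finset.range (t+1),
        EWr G α t (fun l => ∑ u : V, (if badU G u (l.drop i) then (1:ℝ) else 0)) []
      ≤ ∑ _i ∈ Finset.range (t+1), (Fintype.card V : ℝ) * Real.exp (-(ε^2 * Δ / 6)) :=
        Finset.sum_le_sum step2
    _ = (t+1) * (Fintype.card V) * Real.exp (-(ε^2 * Δ / 6)) := by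
        rw [Finset.sum_const, Finset.card_range, nsmul_eq_mul]
        push_cast
        ring

lemma hit_zero (hα0 : 0 < α) (hα1 : α < 1) (t : ℕ) (ht : t < Fintype.card V) :
    EWr G α t (fun l => if (fun _ => true : V → Bool) ∈ cfgs l then (1:ℝ) else 0)
        ([] : List (V × Bool)) ≤ 0 := by
  have step1 : EWr G α t (fun l => if (fun _ => true : V → Bool) ∈ cfgs l then (1:ℝ) else 0) []
      ≤ EWr G α t (fun _ => (0:ℝ)) [] := by
    apply EWr_mono G (le_of_lt hα0) (le_of_lt hα1) t []
    intro l hl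
    rw [if_neg (not_hit l (by simp at hl; omega))]
  rw [EWr_zero_fun] at step1
  exact step1

end HitBound


section Hist
variable {W : Type*}

def histf (t : ℕ) (f : ℕ → W) : List W := (List.range (t+1)).reverse.map f

lemma histf_zero (f : ℕ → W) : histf 0 f = [f 0] := rfl

lemma histf_succ (t : ℕ) (f : ℕ → W) : histf (t+1) f = f (t+1) :: histf t f := by
  unfold histf
  rw [List.range_succ, List.reverse_append]
  simp

lemma histf_headI [Inhabited W] (t : ℕ) (f : ℕ → W) : (histf t f).headI = f t := by
  cases t with
  | zero => rfl
  | succ t => rw [histf_succ]; rfl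

lemma histf_congr (t : ℕ) (f g : ℕ → W) (h : ∀ s ≤ t, f s = g s) : histf t f = histf t g := by
  unfold histf
  apply List.map_congr_left
  intro i hi
  apply h
  rw [List.mem_reverse, List.mem_range] at hi
  omega

lemma mem_histf (t : ℕ) (f : ℕ → W) (c : W) : c ∈ histf t f ↔ ∃ s ≤ t, f s = c := by
  unfold histf
  rw [List.mem_map]
  constructor
  · rintro ⟨i, hi, rfl⟩
    rw [List.mem_reverse, List.mem_range] at hi
    exact ⟨i, by omega, rfl⟩
  · rintro ⟨s, hs, rfl⟩
    exact ⟨s, by rw [List.mem_reverse, List.mem_range]; omega, rfl⟩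

end Hist

section Bridge
variable (G : SimpleGraph V) {α : ℝ}

lemma stepProb_nonneg (h0 : 0 ≤ α) (h1 : α ≤ 1) (c c' : V → Bool) :
    0 ≤ stepProb G α c c' := by
  unfold stepProb
  apply mul_nonneg (by positivity)
  apply Finset.sum_nonneg
  intro u _
  have hq0 := qv_nonneg G h0 h1 u c
  have hq1 := qv_le_one G h0 h1 u c
  unfold qv at hq0 hq1
  apply add_nonneg <;> (split_ifs <;> linarith)

lemma sum_stepProb (c : V → Bool) (F : (V → Bool) → ℝ) :
    ∑ c' : V → Bool, stepProb G α c c' * F c'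
      = (Fintype.card V : ℝ)⁻¹ * ∑ u : V, (qv G α u c * F (Function.update c u true)
          + (1 - qv G α u c) * F (Function.update c u false)) := by
  unfold stepProb qv
  have h1 : ∀ c' : V → Bool,
      ((1 / (Fintype.card V : ℝ)) * ∑ u : V,
        ((if c' = Function.update c u true then α + (1 - α) * majorityProb G c u else 0) +
          (if c' = Function.update c u false
            then 1 - (α + (1 - α) * majorityProb G c u) else 0))) * F c'
      = (Fintype.card V : ℝ)⁻¹ * ∑ u : V,
        (((if c' = Function.update c u true then α + (1 - α) * majorityProb G c u else 0)
            * F c') +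
          ((if c' = Function.update c u false
            then 1 - (α + (1 - α) * majorityProb G c u) else 0) * F c')) := by
    intro c'
    rw [one_div, mul_assoc, Finset.sum_mul]
    congr 1
    apply Finset.sum_congr rfl
    intro u _
    ring
  rw [Finset.sum_congr rfl (fun c' _ => h1 c'), ← Finset.mul_sum]
  congr 1
  rw [Finset.sum_comm]
  apply Finset.sum_congr rfl
  intro u _
  rw [Finset.sum_add_distrib]
  congr 1
  · simp only [ite_mul, zero_mul]
    rw [Finset.sum_ite_eq' Finset.univ (Function.update c u true)]
    simp
  · simp only [ite_mul, zero_mul]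
    rw [Finset.sum_ite_eq' Finset.univ (Function.update c u false)]
    simp

lemma EW_nonneg (h0 : 0 ≤ α) (h1 : α ≤ 1) (k : ℕ) (F : List (V → Bool) → ℝ)
    (hF : ∀ l, 0 ≤ F l) : ∀ h : List (V → Bool), 0 ≤ EW G α k F h := by
  induction k with
  | zero => intro h; exact hF h
  | succ k ih =>
    intro h
    apply Finset.sum_nonneg
    intro c' _
    exact mul_nonneg (stepProb_nonneg G h0 h1 _ _) (ih _)

lemma EW_eq_EWr (k : ℕ) (F : List (V → Bool) → ℝ) (r : List (V × Bool)) :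
    EW G α k F (cfgs r) = EWr G α k (fun r' => F (cfgs r')) r := by
  induction k generalizing r with
  | zero => rfl
  | succ k ih =>
    show (∑ c' : V → Bool, stepProb G α (cfgs r).headI c' * EW G α k F (c' :: cfgs r)) = _
    rw [cfgs_head, sum_stepProb G (cfg r) (fun c' => EW G α k F (c' :: cfgs r))]
    show _ = (Fintype.card V : ℝ)⁻¹ * ∑ u : V, _
    congr 1
    apply Finset.sum_congr rfl
    intro u _
    have h1 : ∀ b : Bool, EW G α k F (Function.update (cfg r) u b :: cfgs r)
        = EWr G α k (fun r' => F (cfgs r')) ((u, b) :: r) := by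
      intro b
      have hc : Function.update (cfg r) u b :: cfgs r = cfgs ((u, b) :: r) := rfl
      rw [hc, ih]
    rw [h1 true, h1 false]

end Bridge


section Measure
variable {Ω : Type*} [MeasurableSpace Ω]

noncomputable def indP (Φ : List (V → Bool) → Prop) : List (V → Bool) → ℝ :=
  fun h => if Φ h then 1 else 0

lemma indP_nonneg (Φ : List (V → Bool) → Prop) (l : List (V → Bool)) : 0 ≤ indP Φ l := by
  unfold indP
  split_ifs <;> norm_num

lemma MU2 (μ : Measure Ω) (G : SimpleGraph V) {α : ℝ} (h0 : 0 ≤ α) (h1 : α ≤ 1)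
    (X : ℕ → Ω → (V → Bool))
    (hstep : ∀ (t : ℕ) (f : ℕ → V → Bool) (c' : V → Bool),
      μ {ω | X (t + 1) ω = c' ∧ ∀ s ≤ t, X s ω = f s}
        = ENNReal.ofReal (stepProb G α (f t) c') * μ {ω | ∀ s ≤ t, X s ω = f s})
    (Φ : List (V → Bool) → Prop) :
    ∀ (k t : ℕ) (f : ℕ → V → Bool),
      μ ({ω | Φ (histf (t + k) (fun s => X s ω))} ∩ {ω | ∀ s ≤ t, X s ω = f s})
        ≤ ENNReal.ofReal (EW G α k (indP Φ) (histf t f))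
            * μ {ω | ∀ s ≤ t, X s ω = f s} := by
  intro k
  induction k with
  | zero =>
    intro t f
    by_cases hΦ : Φ (histf t f)
    · have hEW : EW G α 0 (indP Φ) (histf t f) = 1 := by
        show indP Φ (histf t f) = 1
        unfold indP
        rw [if_pos hΦ]
      rw [hEW, ENNReal.ofReal_one, one_mul]
      exact measure_mono Set.inter_subset_right
    · have hempty : {ω | Φ (histf (t + 0) (fun s => X s ω))} ∩ {ω | ∀ s ≤ t, X s ω = f s}
          = ∅ := by
        ext ω
        simp only [Set.mem_inter_iff, Set.mem_setOf_eq, Set.mem_empty_iff_false, iff_false,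
          not_and]
        intro hE hA
        rw [Nat.add_zero] at hE
        rw [histf_congr t _ f (fun s hs => hA s hs)] at hE
        exact hΦ hE
      rw [hempty]
      simp
  | succ k ih =>
    intro t f
    have hEWnn : ∀ h, 0 ≤ EW G α k (indP Φ) h :=
      EW_nonneg G h0 h1 k _ (indP_nonneg Φ)
    have hsub : {ω | Φ (histf (t + (k+1)) (fun s => X s ω))} ∩ {ω | ∀ s ≤ t, X s ω = f s}
        ⊆ ⋃ c' ∈ (Finset.univ : Finset (V → Bool)),
            ({ω | Φ (histf ((t+1) + k) (fun s => X s ω))}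
              ∩ {ω | ∀ s ≤ t+1, X s ω = (Function.update f (t+1) (c')) s}) := by
      rintro ω ⟨hE, hA⟩
      refine Set.mem_iUnion₂.mpr ⟨X (t+1) ω, Finset.mem_univ _, ?_, ?_⟩
      · show Φ (histf ((t+1) + k) (fun s => X s ω))
        have harith : (t+1) + k = t + (k+1) := by omega
        rw [harith]
        exact hE
      · intro s hs
        rcases Nat.lt_or_ge s (t+1) with h | h
        · rw [Function.update_of_ne (by omega)]
          exact hA s (by omega)
        · have hst : s = t+1 := by omega
          subst hst
          rw [Function.update_self]
    have key : ∀ c' : V → Bool,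
        μ ({ω | Φ (histf ((t+1) + k) (fun s => X s ω))}
            ∩ {ω | ∀ s ≤ t+1, X s ω = (Function.update f (t+1) c') s})
          ≤ ENNReal.ofReal (stepProb G α (f t) c'
              * EW G α k (indP Φ) (c' :: histf t f))
            * μ {ω | ∀ s ≤ t, X s ω = f s} := by
      intro c'
      have hIH := ih (t+1) (Function.update f (t+1) c')
      have hA' : μ {ω | ∀ s ≤ t+1, X s ω = (Function.update f (t+1) c') s}
          = ENNReal.ofReal (stepProb G α (f t) c') * μ {ω | ∀ s ≤ t, X s ω = f s} := by
        have hset : {ω | ∀ s ≤ t+1, X s ω = (Function.update f (t+1) c') s}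
            = {ω | X (t+1) ω = c' ∧ ∀ s ≤ t, X s ω = (Function.update f (t+1) c') s} := by
          ext ω
          simp only [Set.mem_setOf_eq]
          constructor
          · intro h
            refine ⟨?_, fun s hs => h s (by omega)⟩
            have := h (t+1) le_rfl
            rwa [Function.update_self] at this
          · rintro ⟨hx, h2⟩ s hs
            rcases Nat.lt_or_ge s (t+1) with hlt | hge
            · exact h2 s (by omega)
            · have hst : s = t+1 := by omega
              subst hst
              rwa [Function.update_self]
        have hft : Function.update f (t+1) c' t = f t := Function.update_of_ne (by omega) _ _
        have hAA : {ω | ∀ s ≤ t, X s ω = (Function.update f (t+1) c') s}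
            = {ω | ∀ s ≤ t, X s ω = f s} := by
          ext ω
          simp only [Set.mem_setOf_eq]
          constructor <;> intro h s hs
          · have := h s hs
            rwa [Function.update_of_ne (by omega)] at this
          · rw [Function.update_of_ne (by omega)]
            exact h s hs
        rw [hset, hstep t (Function.update f (t+1) c') c', hft, hAA]
      have hhist : histf (t+1) (Function.update f (t+1) c') = c' :: histf t f := by
        rw [histf_succ]
        congr 1
        · exact Function.update_self _ _ _
        · exact histf_congr t _ f (fun s hs => Function.update_of_ne (by omega) _ _)
      rw [hhist, hA'] at hIH
      calc μ ({ω | Φ (histf ((t+1) + k) (fun s => X s ω))}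
            ∩ {ω | ∀ s ≤ t+1, X s ω = (Function.update f (t+1) c') s})
          ≤ ENNReal.ofReal (EW G α k (indP Φ) (c' :: histf t f))
              * (ENNReal.ofReal (stepProb G α (f t) c')
                * μ {ω | ∀ s ≤ t, X s ω = f s}) := hIH
        _ = ENNReal.ofReal (stepProb G α (f t) c'
              * EW G α k (indP Φ) (c' :: histf t f))
            * μ {ω | ∀ s ≤ t, X s ω = f s} := by
            rw [← mul_assoc, ← ENNReal.ofReal_mul (hEWnn _), mul_comm
              (EW G α k (indP Φ) (c' :: histf t f))
              (stepProb G α (f t) c')]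
    calc μ ({ω | Φ (histf (t + (k+1)) (fun s => X s ω))} ∩ {ω | ∀ s ≤ t, X s ω = f s})
        ≤ ∑ c' : V → Bool,
            μ ({ω | Φ (histf ((t+1) + k) (fun s => X s ω))}
              ∩ {ω | ∀ s ≤ t+1, X s ω = (Function.update f (t+1) c') s}) :=
          (measure_mono hsub).trans (measure_biUnion_finset_le _ _)
      _ ≤ ∑ c' : V → Bool, ENNReal.ofReal (stepProb G α (f t) c'
            * EW G α k (indP Φ) (c' :: histf t f))
            * μ {ω | ∀ s ≤ t, X s ω = f s} := Finset.sum_le_sum (fun c' _ => key c')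
      _ = ENNReal.ofReal (∑ c' : V → Bool, stepProb G α (f t) c'
            * EW G α k (indP Φ) (c' :: histf t f))
            * μ {ω | ∀ s ≤ t, X s ω = f s} := by
          rw [← Finset.sum_mul, ← ENNReal.ofReal_sum_of_nonneg]
          intro c' _
          exact mul_nonneg (stepProb_nonneg G h0 h1 _ _) (hEWnn _)
      _ = ENNReal.ofReal (EW G α (k+1) (indP Φ) (histf t f))
            * μ {ω | ∀ s ≤ t, X s ω = f s} := by
          congr 1
          show _ = ENNReal.ofReal (∑ c' : V → Bool, stepProb G α (histf t f).headI c'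
            * EW G α k (indP Φ) (c' :: histf t f))
          rw [histf_headI]

end Measure


section MuHit
variable {Ω : Type*} [MeasurableSpace Ω]

lemma mu_hit_le (μ : Measure Ω) [IsProbabilityMeasure μ] [Nonempty V] (G : SimpleGraph V)
    {α : ℝ} (h0 : 0 ≤ α) (h1 : α ≤ 1) (X : ℕ → Ω → (V → Bool))
    (hstart : ∀ᵐ ω ∂μ, X 0 ω = fun _ => false)
    (hstep : ∀ (t : ℕ) (f : ℕ → V → Bool) (c' : V → Bool),
      μ {ω | X (t + 1) ω = c' ∧ ∀ s ≤ t, X s ω = f s}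
        = ENNReal.ofReal (stepProb G α (f t) c') * μ {ω | ∀ s ≤ t, X s ω = f s})
    (t : ℕ) :
    μ {ω | ∃ s ≤ t, X s ω = (fun _ => true)}
      ≤ ENNReal.ofReal (EWr G α t
          (fun l => if (fun _ => true : V → Bool) ∈ cfgs l then (1:ℝ) else 0)
          ([] : List (V × Bool))) := by
  set Φ : List (V → Bool) → Prop := fun h => (fun _ => true : V → Bool) ∈ h with hΦ
  set cF : ℕ → V → Bool := fun _ _ => false with hcF
  have hE : {ω | ∃ s ≤ t, X s ω = (fun _ => true)}
      = {ω | Φ (histf (0 + t) (fun s => X s ω))} := by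
    ext ω
    simp only [Set.mem_setOf_eq, hΦ, Nat.zero_add]
    rw [mem_histf]
  have hA0 : {ω | ∀ s ≤ 0, X s ω = cF s} = {ω | X 0 ω = (fun _ => false)} := by
    ext ω
    simp only [Set.mem_setOf_eq]
    constructor
    · intro h
      exact h 0 le_rfl
    · intro h s hs
      have hs0 : s = 0 := Nat.le_zero.mp hs
      subst hs0
      exact h
  have hnull : μ {ω | ¬ X 0 ω = (fun _ => false)} = 0 := by
    exact hstart
  calc μ {ω | ∃ s ≤ t, X s ω = (fun _ => true)}
      ≤ μ ({ω | Φ (histf (0 + t) (fun s => X s ω))} ∩ {ω | ∀ s ≤ 0, X s ω = cF s})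
          + μ {ω | ¬ X 0 ω = (fun _ => false)} := by
        rw [hE]
        refine (measure_mono ?_).trans (measure_union_le _ _)
        intro ω hω
        by_cases hc : X 0 ω = (fun _ => false)
        · exact Or.inl ⟨hω, by rw [hA0]; exact hc⟩
        · exact Or.inr hc
    _ = μ ({ω | Φ (histf (0 + t) (fun s => X s ω))} ∩ {ω | ∀ s ≤ 0, X s ω = cF s}) := by
        rw [hnull, add_zero]
    _ ≤ ENNReal.ofReal (EW G α t (indP Φ) (histf 0 cF))
          * μ {ω | ∀ s ≤ 0, X s ω = cF s} :=
        MU2 μ G h0 h1 X hstep Φ t 0 cF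
    _ ≤ ENNReal.ofReal (EW G α t (indP Φ) (histf 0 cF)) * 1 :=
        mul_le_mul_right prob_le_one _
    _ = ENNReal.ofReal (EW G α t (indP Φ) (histf 0 cF)) := by
        rw [mul_one]
    _ ≤ ENNReal.ofReal (EWr G α t
          (fun l => if (fun _ => true : V → Bool) ∈ cfgs l then (1:ℝ) else 0) []) := by
        apply le_of_eq
        congr 1
        have hch : histf 0 cF = cfgs ([] : List (V × Bool)) := rfl
        rw [hch, EW_eq_EWr]
        congr 1
        funext l
        show indP Φ (cfgs l) = _
        rw [hΦ]
        simp only [indP]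
        by_cases hm : (fun _ => true : V → Bool) ∈ cfgs l
        · rw [if_pos hm, if_pos hm]
        · rw [if_neg hm, if_neg hm]

end MuHit
end BMD


open BMD
open scoped ENNReal

/-- Biased majority dynamics on a graph with minimum degree `Δ`, bias
`0 < α ≤ (1-ε)/2`, started from all zeros: the expected absorption time to the
all-ones configuration (written as `∑ₜ P(τ > t)`) is at least `e^{ε²Δ/6}/(6n)`. -/
theorem stmt_15 {Ω : Type*} [MeasurableSpace Ω] (μ : Measure Ω) [IsProbabilityMeasure μ]
    {V : Type*} [Fintype V] [Nonempty V] (G : SimpleGraph V)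
    (Δ : ℕ) (hΔ : ∀ v : V, Δ ≤ G.degree v)
    (ε : ℝ) (hε0 : 0 < ε) (hε1 : ε < 1)
    (α : ℝ) (hα0 : 0 < α) (hα : α ≤ (1 - ε) / 2)
    (X : ℕ → Ω → (V → Bool))
    (hstart : ∀ᵐ ω ∂μ, X 0 ω = fun _ => false)
    (hstep : ∀ (t : ℕ) (f : ℕ → V → Bool) (c' : V → Bool),
      μ {ω | X (t + 1) ω = c' ∧ ∀ s ≤ t, X s ω = f s}
        = ENNReal.ofReal (stepProb G α (f t) c') * μ {ω | ∀ s ≤ t, X s ω = f s}) :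
    ENNReal.ofReal (Real.exp (ε ^ 2 * Δ / 6) / (6 * Fintype.card V))
      ≤ ∑' t : ℕ, μ {ω | ∀ s ≤ t, X s ω ≠ fun _ => true} := by
  classical
  have h1 : α ≤ 1 := by linarith
  have h0 : (0:ℝ) ≤ α := le_of_lt hα0
  have hα1 : α < 1 := by linarith
  have hnpos : 0 < Fintype.card V := Fintype.card_pos
  have hnR : (0:ℝ) < (Fintype.card V : ℝ) := by exact_mod_cast hnpos
  set n : ℕ := Fintype.card V with hn
  set x : ℝ := Real.exp (ε ^ 2 * Δ / 6) with hx
  have hxpos : (0:ℝ) < x := Real.exp_pos _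
  have K1 : ∀ t : ℕ, μ {ω | ∃ s ≤ t, X s ω = (fun _ => true : V → Bool)}
      ≤ ENNReal.ofReal (((t:ℝ)+1) * n * x⁻¹) := by
    intro t
    refine (mu_hit_le μ G h0 h1 X hstart hstep t).trans (ENNReal.ofReal_le_ofReal ?_)
    have hb := hit_bound G hα0 hε0 hε1 hα Δ hΔ t
    rwa [Real.exp_neg] at hb
  have K2 : ∀ t : ℕ, t < n → μ {ω | ∃ s ≤ t, X s ω = (fun _ => true : V → Bool)} = 0 := by
    intro t ht
    have hle := (mu_hit_le μ G h0 h1 X hstart hstep t).trans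
      (ENNReal.ofReal_le_ofReal (hit_zero G hα0 hα1 t ht))
    simpa using hle
  have hgood : ∀ t : ℕ, 1 - μ {ω | ∃ s ≤ t, X s ω = (fun _ => true : V → Bool)}
      ≤ μ {ω | ∀ s ≤ t, X s ω ≠ fun _ => true} := by
    intro t
    rw [tsub_le_iff_right]
    have hcompl : {ω : Ω | ∀ s ≤ t, X s ω ≠ fun _ => true}
        ∪ {ω : Ω | ∃ s ≤ t, X s ω = (fun _ => true : V → Bool)} = Set.univ := by
      ext ω
      simp only [Set.mem_union, Set.mem_setOf_eq, Set.mem_univ, iff_true]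
      by_cases hb : ∃ s ≤ t, X s ω = (fun _ => true : V → Bool)
      · exact Or.inr hb
      · push_neg at hb
        exact Or.inl hb
    calc (1:ℝ≥0∞) = μ Set.univ := (measure_univ).symm
      _ = μ ({ω : Ω | ∀ s ≤ t, X s ω ≠ fun _ => true}
            ∪ {ω : Ω | ∃ s ≤ t, X s ω = (fun _ => true : V → Bool)}) := by rw [hcompl]
      _ ≤ _ := measure_union_le _ _
  by_cases hcase : x ≤ 12 * n
  · have hA : ∀ t < n, (1:ℝ≥0∞) ≤ μ {ω | ∀ s ≤ t, X s ω ≠ fun _ => true} := by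
      intro t ht
      have hg := hgood t
      rw [K2 t ht, tsub_zero] at hg
      exact hg
    have hsum : (n:ℝ≥0∞) ≤ ∑ t ∈ Finset.range n, μ {ω | ∀ s ≤ t, X s ω ≠ fun _ => true} := by
      calc (n:ℝ≥0∞) = (Finset.range n).card • (1:ℝ≥0∞) := by simp
        _ ≤ ∑ t ∈ Finset.range n, μ {ω | ∀ s ≤ t, X s ω ≠ fun _ => true} :=
            Finset.card_nsmul_le_sum _ _ 1 (fun t ht => hA t (Finset.mem_range.mp ht))
    have hreal : x / (6 * n) ≤ (n:ℝ) := by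
      rcases Nat.lt_or_ge 1 n with hn1 | hn1
      · have h2n : (2:ℝ) ≤ (n:ℝ) := by exact_mod_cast hn1
        rw [div_le_iff₀ (by positivity)]
        nlinarith
      · have hn1' : n = 1 := by omega
        have hΔ0 : Δ = 0 := by
          obtain ⟨v⟩ := (inferInstance : Nonempty V)
          have hd := hΔ v
          have hd2 : G.degree v < n := G.degree_lt_card_verts v
          omega
        rw [hx, hΔ0, hn1']
        norm_num
    calc ENNReal.ofReal (x / (6 * n)) ≤ ENNReal.ofReal ((n:ℝ)) :=
          ENNReal.ofReal_le_ofReal hreal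
      _ = (n:ℝ≥0∞) := ENNReal.ofReal_natCast n
      _ ≤ ∑ t ∈ Finset.range n, μ {ω | ∀ s ≤ t, X s ω ≠ fun _ => true} := hsum
      _ ≤ ∑' t : ℕ, μ {ω | ∀ s ≤ t, X s ω ≠ fun _ => true} := ENNReal.sum_le_tsum _
  · push_neg at hcase
    set T : ℕ := ⌊x / (3 * n)⌋₊ with hT
    have hT1 : (T:ℝ) ≤ x / (3 * n) := Nat.floor_le (by positivity)
    have hT2 : x / (3 * n) < T + 1 := Nat.lt_floor_add_one _
    have hBt : ∀ t ∈ Finset.range T, ENNReal.ofReal ((2:ℝ)/3)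
        ≤ μ {ω | ∀ s ≤ t, X s ω ≠ fun _ => true} := by
      intro t ht
      have htT : (t:ℝ) + 1 ≤ (T:ℝ) := by
        have := Finset.mem_range.mp ht
        exact_mod_cast Nat.succ_le_of_lt this
      have hb : μ {ω | ∃ s ≤ t, X s ω = (fun _ => true : V → Bool)}
          ≤ ENNReal.ofReal ((1:ℝ)/3) := by
        refine (K1 t).trans (ENNReal.ofReal_le_ofReal ?_)
        have hstep1 : ((t:ℝ)+1) * n * x⁻¹ ≤ (x / (3*n)) * n * x⁻¹ := by
          apply mul_le_mul_of_nonneg_right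
            (mul_le_mul_of_nonneg_right (htT.trans hT1) (le_of_lt hnR)) (by positivity)
        have hstep2 : (x / (3*(n:ℝ))) * n * x⁻¹ = 1/3 := by
          field_simp
        linarith
      calc ENNReal.ofReal ((2:ℝ)/3) = 1 - ENNReal.ofReal ((1:ℝ)/3) := by
            rw [← ENNReal.ofReal_one, ← ENNReal.ofReal_sub _ (by norm_num : (0:ℝ) ≤ 1/3)]
            norm_num
        _ ≤ 1 - μ {ω | ∃ s ≤ t, X s ω = (fun _ => true : V → Bool)} := tsub_le_tsub_left hb 1
        _ ≤ _ := hgood t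
    have hsum : (T:ℝ≥0∞) * ENNReal.ofReal ((2:ℝ)/3)
        ≤ ∑ t ∈ Finset.range T, μ {ω | ∀ s ≤ t, X s ω ≠ fun _ => true} := by
      calc (T:ℝ≥0∞) * ENNReal.ofReal ((2:ℝ)/3)
          = (Finset.range T).card • ENNReal.ofReal ((2:ℝ)/3) := by
            rw [nsmul_eq_mul, Finset.card_range]
        _ ≤ _ := Finset.card_nsmul_le_sum _ _ _ hBt
    have hreal : x / (6 * n) ≤ (T:ℝ) * (2/3) := by
      have hT3 : x / (3 * n) - 1 ≤ (T:ℝ) := by linarith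
      have hid : 3*(n:ℝ) * (x / (3 * n)) = x := by field_simp
      rw [div_le_iff₀ (by positivity : (0:ℝ) < 6*n)]
      nlinarith [mul_le_mul_of_nonneg_left hT3 (by positivity : (0:ℝ) ≤ 3*(n:ℝ))]
    calc ENNReal.ofReal (x / (6 * n)) ≤ ENNReal.ofReal ((T:ℝ) * (2/3)) :=
          ENNReal.ofReal_le_ofReal hreal
      _ = (T:ℝ≥0∞) * ENNReal.ofReal ((2:ℝ)/3) := by
          rw [ENNReal.ofReal_mul (by positivity), ENNReal.ofReal_natCast]
      _ ≤ ∑ t ∈ Finset.range T, μ {ω | ∀ s ≤ t, X s ω ≠ fun _ => true} := hsum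
      _ ≤ ∑' t : ℕ, μ {ω | ∀ s ≤ t, X s ω ≠ fun _ => true} := ENNReal.sum_le_tsum _
end

section
/- Let G = C_n be the cycle on n ≥ 3 nodes and run the biased majority dynamics with bias α ∈ (0,1] from the all-zeros configuration. Then with probability at least 1 - 1/n, the absorption time τ satisfies τ ≤ (2/α) n log n. -/
open MeasureTheory Finset
open scoped Classical

/-- The cycle on `n` nodes, with vertex set `ZMod n` and edges `{u, u+1}`. -/
def cycleGraph (n : ℕ) : SimpleGraph (ZMod n) :=
  SimpleGraph.fromRel (fun u v => v = u + 1)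


section Cyc
variable {n : ℕ} [NeZero n] (hn : 3 ≤ n)

lemma zmodTwoNeZero (hn : 3 ≤ n) : (2 : ZMod n) ≠ 0 := by
  have : ((2:ℕ) : ZMod n) ≠ 0 := by
    rw [Ne, ZMod.natCast_eq_zero_iff]
    exact fun h => absurd (Nat.le_of_dvd (by norm_num) h) (by omega)
  simpa using this

lemma zmodOneNeZero (hn : 3 ≤ n) : (1 : ZMod n) ≠ 0 := by
  have : ((1:ℕ) : ZMod n) ≠ 0 := by
    rw [Ne, ZMod.natCast_eq_zero_iff]
    exact fun h => absurd (Nat.le_of_dvd (by norm_num) h) (by omega)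
  simpa using this

lemma cycle_nbr (hn : 3 ≤ n) (u : ZMod n) :
    (cycleGraph n).neighborFinset u = {u + 1, u - 1} := by
  have hu1 : ∀ w : ZMod n, w + 1 ≠ w := fun w hh => zmodOneNeZero hn (by linear_combination hh)
  have hu2 : ∀ w : ZMod n, w - 1 ≠ w := fun w hh => zmodOneNeZero hn (by linear_combination -hh)
  ext v
  rw [SimpleGraph.mem_neighborFinset]
  constructor
  · rintro ⟨hne, h | h⟩
    · simp [h]
    · simp only [mem_insert, mem_singleton]
      right; rw [h]; ring
  · intro hv
    simp only [mem_insert, mem_singleton] at hv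
    rcases hv with h | h
    · subst h; exact ⟨Ne.symm (hu1 u), Or.inl rfl⟩
    · subst h; exact ⟨Ne.symm (hu2 u), Or.inr (by ring)⟩

lemma cycle_major (hn : 3 ≤ n) (c : ZMod n → Bool) (u : ZMod n) :
    majorityProb (cycleGraph n) c u
      = ((if c (u+1) then 1 else 0) + (if c (u-1) then 1 else 0)) / 2 := by
  have hne : u + 1 ≠ u - 1 := by
    intro h
    exact zmodTwoNeZero hn (by linear_combination h)
  have hdeg : (cycleGraph n).degree u = 2 := by
    rw [SimpleGraph.degree, cycle_nbr hn, card_insert_of_notMem (by simpa using hne),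
      card_singleton]
  have hfilter : ((cycleGraph n).neighborFinset u).filter (fun v => c v = true)
      = ({u+1, u-1} : Finset (ZMod n)).filter (fun v => c v = true) := by
    rw [cycle_nbr hn]
  rw [majorityProb, hdeg, hfilter]
  rw [filter_insert, filter_singleton]
  by_cases h1 : c (u+1) = true <;> by_cases h2 : c (u-1) = true <;>
    simp [h1, h2, card_insert_of_notMem, hne] <;> norm_num
end Cyc

section Drift
variable {n : ℕ} [NeZero n]

noncomputable def phiZ (c : ZMod n → Bool) : ℝ := ∑ v : ZMod n, (if c v then 0 else 1)

lemma phiZ_nonneg (c : ZMod n → Bool) : 0 ≤ phiZ c := by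
  apply Finset.sum_nonneg; intro v _; split <;> norm_num

lemma phiZ_false : phiZ (fun _ : ZMod n => false) = n := by
  simp [phiZ, Finset.card_univ]

lemma phiZ_update (c : ZMod n → Bool) (u : ZMod n) (b : Bool) :
    phiZ (Function.update c u b)
      = phiZ c - (if c u then 0 else 1) + (if b then 0 else 1) := by
  unfold phiZ
  rw [← Finset.sum_erase_add _ _ (Finset.mem_univ u),
      ← Finset.sum_erase_add _ (fun v => if c v then (0:ℝ) else 1) (Finset.mem_univ u)]
  have h1 : ∀ v ∈ Finset.univ.erase u,
      (if Function.update c u b v then (0:ℝ) else 1) = (if c v then 0 else 1) := by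
    intro v hv
    rw [Function.update_of_ne (Finset.ne_of_mem_erase hv)]
  rw [Finset.sum_congr rfl h1, Function.update_self]
  ring

lemma phiZ_ge_one (c : ZMod n → Bool) (hc : c ≠ fun _ => true) : 1 ≤ phiZ c := by
  have : ∃ v, c v = false := by
    by_contra h
    push_neg at h
    exact hc (funext fun v => by simpa using h v)
  obtain ⟨v, hv⟩ := this
  unfold phiZ
  rw [← Finset.sum_erase_add _ _ (Finset.mem_univ v), hv]
  simp only [Bool.false_eq_true, if_false]
  have : 0 ≤ ∑ w ∈ Finset.univ.erase v, (if c w then (0:ℝ) else 1) := by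
    apply Finset.sum_nonneg; intro w _; split <;> norm_num
  linarith

lemma sum_majority (hn : 3 ≤ n) (c : ZMod n → Bool) :
    ∑ u : ZMod n, majorityProb (cycleGraph n) c u = n - phiZ c := by
  have h : ∀ u : ZMod n, majorityProb (cycleGraph n) c u
      = ((if c (u+1) then 1 else 0) + (if c (u-1) then 1 else 0)) / 2 :=
    cycle_major hn c
  rw [Finset.sum_congr rfl (fun u _ => h u)]
  have e1 : ∑ u : ZMod n, (if c (u+1) then (1:ℝ) else 0)
      = ∑ u : ZMod n, (if c u then (1:ℝ) else 0) := by
    apply Fintype.sum_bijective (· + (1:ZMod n)) (Equiv.addRight (1 : ZMod n)).bijective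
    intro u; rfl
  have e2 : ∑ u : ZMod n, (if c (u-1) then (1:ℝ) else 0)
      = ∑ u : ZMod n, (if c u then (1:ℝ) else 0) := by
    apply Fintype.sum_bijective (· - (1:ZMod n)) (Equiv.subRight (1 : ZMod n)).bijective
    intro u; rfl
  have e3 : ∑ u : ZMod n, (if c u then (1:ℝ) else 0) = n - phiZ c := by
    unfold phiZ
    have h4 : ∀ v : ZMod n, (if c v then (1:ℝ) else 0) = 1 - (if c v then 0 else 1) := by
      intro v; split <;> norm_num
    rw [Finset.sum_congr rfl fun v _ => h4 v, Finset.sum_sub_distrib]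
    simp [Finset.card_univ]
  rw [← Finset.sum_div, Finset.sum_add_distrib, e1, e2, e3]
  ring

end Drift

section Drift2
variable {n : ℕ} [NeZero n]

lemma sum_stepProb_phi (hn : 3 ≤ n) (α : ℝ) (c : ZMod n → Bool) :
    ∑ c' : ZMod n → Bool, stepProb (cycleGraph n) α c c' * phiZ c'
      = (1 - α/n) * phiZ c := by
  have hn0 : (0:ℝ) < n := by
    have : 0 < n := Nat.pos_of_ne_zero (NeZero.ne n)
    exact_mod_cast this
  have hcard : ((Fintype.card (ZMod n)) : ℝ) = n := by rw [ZMod.card]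
  have step1 : ∀ c' : ZMod n → Bool,
      stepProb (cycleGraph n) α c c' * phiZ c'
      = (1/(n:ℝ)) * ∑ u : ZMod n,
          ((if c' = Function.update c u true
              then (α + (1 - α) * majorityProb (cycleGraph n) c u) * phiZ c' else 0) +
            (if c' = Function.update c u false
              then (1 - (α + (1 - α) * majorityProb (cycleGraph n) c u)) * phiZ c'
              else 0)) := by
    intro c'
    unfold stepProb
    rw [hcard, mul_assoc, Finset.sum_mul]
    congr 1
    apply Finset.sum_congr rfl
    intro u _
    simp only [add_mul, ite_mul, zero_mul]
    congr!
  simp only [step1]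
  rw [← Finset.mul_sum, Finset.sum_comm]
  have step2 : ∀ u : ZMod n,
      (∑ c' : ZMod n → Bool,
        ((if c' = Function.update c u true
            then (α + (1 - α) * majorityProb (cycleGraph n) c u) * phiZ c' else 0) +
          (if c' = Function.update c u false
            then (1 - (α + (1 - α) * majorityProb (cycleGraph n) c u)) * phiZ c'
            else 0)))
      = phiZ c - (if c u then 0 else 1) + 1
          - (α + (1 - α) * majorityProb (cycleGraph n) c u) := by
    intro u
    rw [Finset.sum_add_distrib, Finset.sum_ite_eq' Finset.univ,
      Finset.sum_ite_eq' Finset.univ]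
    simp only [Finset.mem_univ, if_true]
    rw [phiZ_update, phiZ_update]
    simp only [Bool.false_eq_true, if_false, if_true]
    ring
  simp only [step2]
  rw [Finset.sum_sub_distrib, Finset.sum_add_distrib, Finset.sum_sub_distrib]
  rw [Finset.sum_add_distrib, ← Finset.mul_sum, sum_majority hn c]
  have hconst : ∀ (r : ℝ), ∑ _u : ZMod n, r = n * r := by
    intro r; rw [Finset.sum_const, Finset.card_univ, ZMod.card, nsmul_eq_mul]
  rw [hconst, hconst]
  have hphi : ∑ u : ZMod n, (if c u then (0:ℝ) else 1) = phiZ c := rfl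
  rw [hphi]
  field_simp
  simp only [hconst]
  ring

end Drift2

section Chain
variable {n : ℕ} [NeZero n]

lemma majorityProb_mem {V : Type*} [Fintype V] (G : SimpleGraph V) (c : V → Bool) (u : V) :
    0 ≤ majorityProb G c u ∧ majorityProb G c u ≤ 1 := by
  unfold majorityProb; split_ifs <;> norm_num

lemma stepProb_nonneg {V : Type*} [Fintype V] (G : SimpleGraph V) {α : ℝ}
    (hα0 : 0 ≤ α) (hα1 : α ≤ 1) (c c' : V → Bool) : 0 ≤ stepProb G α c c' := by
  unfold stepProb
  apply mul_nonneg (by positivity)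
  apply Finset.sum_nonneg
  intro u _
  obtain ⟨hm0, hm1⟩ := majorityProb_mem G c u
  apply add_nonneg <;> (split_ifs <;> nlinarith)

noncomputable def mchain (n : ℕ) [NeZero n] (α : ℝ) : ℕ → (ZMod n → Bool) → ℝ
  | 0 => fun c => if c = (fun _ => false) then 1 else 0
  | (t+1) => fun c' => ∑ c : ZMod n → Bool, mchain n α t c * stepProb (cycleGraph n) α c c'

lemma mchain_nonneg {α : ℝ} (hα0 : 0 ≤ α) (hα1 : α ≤ 1) (t : ℕ) (c : ZMod n → Bool) :
    0 ≤ mchain n α t c := by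
  induction t generalizing c with
  | zero => unfold mchain; split_ifs <;> norm_num
  | succ t ih =>
    unfold mchain
    exact Finset.sum_nonneg fun c'' _ =>
      mul_nonneg (ih c'') (stepProb_nonneg _ hα0 hα1 c'' c)

lemma sum_mchain_phi (hn : 3 ≤ n) {α : ℝ} (t : ℕ) :
    ∑ c : ZMod n → Bool, mchain n α t c * phiZ c = (1 - α/n)^t * n := by
  induction t with
  | zero =>
    simp only [mchain, pow_zero, one_mul, ite_mul, one_mul, zero_mul]
    rw [Finset.sum_ite_eq' Finset.univ]
    simp [phiZ_false]
  | succ t ih =>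
    have : ∀ c' : ZMod n → Bool, mchain n α (t+1) c' * phiZ c'
        = ∑ c : ZMod n → Bool, mchain n α t c * (stepProb (cycleGraph n) α c c' * phiZ c') := by
      intro c'
      show (∑ c : ZMod n → Bool, mchain n α t c * stepProb (cycleGraph n) α c c') * phiZ c' = _
      rw [Finset.sum_mul]
      exact Finset.sum_congr rfl fun c _ => by ring
    simp only [this]
    rw [Finset.sum_comm]
    have h2 : ∀ c : ZMod n → Bool,
        ∑ c' : ZMod n → Bool, mchain n α t c * (stepProb (cycleGraph n) α c c' * phiZ c')
          = mchain n α t c * ((1 - α/n) * phiZ c) := by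
      intro c
      rw [← Finset.mul_sum, sum_stepProb_phi hn]
    simp only [h2]
    have h3 : ∀ c : ZMod n → Bool, mchain n α t c * ((1 - α/n) * phiZ c)
        = (1 - α/n) * (mchain n α t c * phiZ c) := fun c => by ring
    simp only [h3]
    rw [← Finset.mul_sum, ih]
    ring

end Chain

section Pasts
variable {n : ℕ} [NeZero n]

noncomputable def pasts (n : ℕ) [NeZero n] : ℕ → Finset (ℕ → ZMod n → Bool)
  | 0 => Finset.univ.image fun c : ZMod n → Bool => Function.update (fun _ _ => false) 0 c
  | (t+1) => (pasts n t ×ˢ Finset.univ).image fun p => Function.update p.1 (t+1) p.2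

lemma pasts_tail {t : ℕ} {g : ℕ → ZMod n → Bool} (hg : g ∈ pasts n t) :
    ∀ s, t < s → g s = fun _ => false := by
  induction t generalizing g with
  | zero =>
    rw [pasts, Finset.mem_image] at hg
    obtain ⟨c, -, rfl⟩ := hg
    intro s hs
    rw [Function.update_of_ne (by omega)]
  | succ t ih =>
    rw [pasts, Finset.mem_image] at hg
    obtain ⟨⟨g', c⟩, hmem, rfl⟩ := hg
    rw [Finset.mem_product] at hmem
    intro s hs
    rw [Function.update_of_ne (by omega)]
    exact ih hmem.1 s (by omega)

lemma trunc_mem (t : ℕ) (h : ℕ → ZMod n → Bool) :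
    (fun s => if s ≤ t then h s else fun _ => false) ∈ pasts n t := by
  induction t with
  | zero =>
    rw [pasts, Finset.mem_image]
    refine ⟨h 0, Finset.mem_univ _, ?_⟩
    funext s
    rcases Nat.eq_zero_or_pos s with rfl | hs
    · rw [Function.update_self]; simp
    · rw [Function.update_of_ne (by omega)]
      simp [Nat.not_le.2 hs]
  | succ t ih =>
    rw [pasts, Finset.mem_image]
    refine ⟨⟨fun s => if s ≤ t then h s else fun _ => false, h (t+1)⟩,
      Finset.mem_product.2 ⟨ih, Finset.mem_univ _⟩, ?_⟩
    funext s
    rcases eq_or_ne s (t+1) with rfl | hs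
    · rw [Function.update_self]; simp
    · rw [Function.update_of_ne hs]
      show (if s ≤ t then h s else fun _ => false) = _
      rcases Nat.lt_or_ge s (t+1) with h1 | h1
      · have h2 : s ≤ t := by omega
        have h3 : s ≤ t + 1 := by omega
        simp [h2, h3]
      · have h2 : ¬ s ≤ t := by omega
        have h3 : ¬ s ≤ t + 1 := by omega
        simp [h2, h3]

lemma pasts_sum_succ {M : Type*} [AddCommMonoid M] (t : ℕ) (F : (ℕ → ZMod n → Bool) → M) :
    ∑ g ∈ pasts n (t+1), F g
      = ∑ g ∈ pasts n t, ∑ c : ZMod n → Bool, F (Function.update g (t+1) c) := by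
  show ∑ g ∈ (pasts n t ×ˢ Finset.univ).image
      (fun p => Function.update p.1 (t+1) p.2), F g = _
  rw [Finset.sum_image, Finset.sum_product]
  intro p hp q hq heq
  rw [Finset.mem_coe, Finset.mem_product] at hp hq
  have hc : p.2 = q.2 := by
    have := congrFun heq (t+1); dsimp only at this
    rwa [Function.update_self, Function.update_self] at this
  have hg : p.1 = q.1 := by
    funext s
    rcases eq_or_ne s (t+1) with rfl | hs
    · rw [pasts_tail hp.1 _ (by omega), pasts_tail hq.1 _ (by omega)]
    · have := congrFun heq s; dsimp only at this
      rwa [Function.update_of_ne hs, Function.update_of_ne hs] at this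
  exact Prod.ext hg hc

lemma pasts_sum_zero {M : Type*} [AddCommMonoid M] (F : (ℕ → ZMod n → Bool) → M) :
    ∑ g ∈ pasts n 0, F g
      = ∑ c : ZMod n → Bool, F (Function.update (fun _ _ => false) 0 c) := by
  show ∑ g ∈ Finset.univ.image
      (fun c : ZMod n → Bool => Function.update (fun _ _ => false) 0 c), F g = _
  rw [Finset.sum_image]
  intro c _ c' _ heq
  have := congrFun heq 0; dsimp only at this
  rwa [Function.update_self, Function.update_self] at this

end Pasts


lemma log_cubic {x : ℝ} (h0 : 0 ≤ x) (h1 : x ≤ 1/3) :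
    x + x^2/2 + x^3/3 ≤ -Real.log (1 - x) := by
  have hx1 : (0:ℝ) < 1 - x := by linarith
  have hy1 : x^2/2 + x^3/3 < 1 := by nlinarith
  have hgoal : Real.log (1-x) ≤ -(x + (x^2/2 + x^3/3)) := by
    rw [Real.log_le_iff_le_exp hx1]
    have hex : Real.exp x ≤ 1 + x + x^2/2 + x^3/6 + x^4*5/96 := by
      have h := Real.exp_bound' h0 (by linarith) (n := 4) (by norm_num)
      simp [Finset.sum_range_succ, Nat.factorial] at h
      nlinarith [h]
    have key : (1-x) * Real.exp x ≤ 1 - (x^2/2 + x^3/3) := by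
      have h3 := mul_le_mul_of_nonneg_left hex hx1.le
      nlinarith [h3, pow_nonneg h0 4, pow_nonneg h0 5]
    have hey : Real.exp (x^2/2 + x^3/3) ≤ 1/(1-(x^2/2 + x^3/3)) := by
      rw [le_div_iff₀ (by linarith)]
      have h2 := Real.add_one_le_exp (-(x^2/2 + x^3/3))
      calc Real.exp (x^2/2 + x^3/3) * (1-(x^2/2 + x^3/3))
          ≤ Real.exp (x^2/2 + x^3/3) * Real.exp (-(x^2/2 + x^3/3)) := by
            apply mul_le_mul_of_nonneg_left (by linarith) (Real.exp_pos _).le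
        _ = 1 := by rw [← Real.exp_add, add_neg_cancel, Real.exp_zero]
    have hprod : (1-x) * Real.exp (x + (x^2/2 + x^3/3)) ≤ 1 := by
      rw [Real.exp_add]
      calc (1-x) * (Real.exp x * Real.exp (x^2/2 + x^3/3))
          = ((1-x) * Real.exp x) * Real.exp (x^2/2 + x^3/3) := by ring
        _ ≤ (1-(x^2/2 + x^3/3)) * (1/(1-(x^2/2 + x^3/3))) := by
            apply mul_le_mul key hey (Real.exp_pos _).le (by nlinarith [Real.exp_pos x])
        _ = 1 := by rw [mul_one_div, div_self (by linarith)]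
    have hepos := Real.exp_pos (x + (x^2/2 + x^3/3))
    rw [Real.exp_neg, inv_eq_one_div, le_div_iff₀ hepos]
    linarith [hprod]
  linarith

lemma analytic_bound (n : ℕ) (hn : 3 ≤ n) (α : ℝ) (hα0 : 0 < α) (hα1 : α ≤ 1) :
    (n:ℝ) * (1 - α/n)^(⌊2/α * n * Real.log n⌋₊) ≤ 1/n := by
  have hn0 : (0:ℝ) < n := by positivity
  have hn3 : (3:ℝ) ≤ n := by exact_mod_cast hn
  set x : ℝ := α / n with hxdef
  have hx0 : 0 < x := by positivity
  have hx3 : x ≤ 1/3 := by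
    rw [hxdef, div_le_iff₀ hn0]; nlinarith
  have hx1 : (0:ℝ) < 1 - x := by linarith
  have hlogn : 1 ≤ Real.log n := by
    rw [Real.le_log_iff_exp_le hn0]
    calc Real.exp 1 ≤ 2.7182818286 := Real.exp_one_lt_d9.le
      _ ≤ n := by linarith
  set c : ℝ := 2 * Real.log n with hcdef
  have hc2 : 2 ≤ c := by linarith
  set L : ℝ := -Real.log (1 - x) with hLdef
  have hLq : x + x^2/2 + x^3/3 ≤ L := log_cubic hx0.le hx3
  have hL0 : 0 < L := by nlinarith
  have hkey : c * x ≤ L * (c - x) := by nlinarith [sq_nonneg x, pow_nonneg hx0.le 3]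
  have hT : 2/α * n * Real.log n = c/x := by
    rw [hcdef, hxdef]; field_simp
  set t0 : ℕ := ⌊2/α * n * Real.log n⌋₊ with ht0
  have hTpos : 0 < 2/α * n * Real.log n := by
    apply mul_pos (mul_pos (by positivity) hn0); linarith
  have hfloor : 2/α * n * Real.log n - 1 < t0 := Nat.sub_one_lt_floor _
  have htL : c ≤ t0 * L := by
    have h1 : c/x - 1 < (t0:ℝ) := by rw [← hT]; exact hfloor
    have h2 : (c/x - 1) * L ≤ t0 * L := by
      apply mul_le_mul_of_nonneg_right h1.le hL0.le
    calc c = (c * x) / x := by field_simp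
      _ ≤ (L * (c - x)) / x := by gcongr
      _ = (c/x - 1) * L := by field_simp
      _ ≤ t0 * L := h2
  have hpow : (1 - x)^t0 ≤ Real.exp (-c) := by
    have : (1 - x)^t0 = Real.exp (t0 * Real.log (1-x)) := by
      rw [Real.exp_nat_mul, Real.exp_log hx1]
    rw [this]
    apply Real.exp_le_exp.2
    have : Real.log (1 - x) = -L := by rw [hLdef]; ring
    rw [this]; linarith
  have hexpc : Real.exp (-c) = 1 / (n:ℝ)^2 := by
    have h5 : Real.exp c = (n:ℝ)^2 := by
      rw [hcdef, show (2:ℝ) = ((2:ℕ):ℝ) by norm_num, ← Real.log_pow,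
        Real.exp_log (by positivity)]
    rw [Real.exp_neg, h5, inv_eq_one_div]
  calc (n:ℝ) * (1-x)^t0 ≤ n * (1/(n:ℝ)^2) := by
        apply mul_le_mul_of_nonneg_left _ hn0.le
        rw [← hexpc]; exact hpow
    _ = 1/n := by field_simp

/-- Biased majority dynamics on the cycle `C_n` (`n ≥ 3`) with bias `α ∈ (0,1]`,
started from all zeros: with probability at least `1 - 1/n`, all nodes hold `1`
by time `(2/α) n log n`. -/
theorem stmt_16 {Ω : Type*} [MeasurableSpace Ω] (μ : Measure Ω) [IsProbabilityMeasure μ]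
    (n : ℕ) [NeZero n] (hn : 3 ≤ n)
    (α : ℝ) (hα0 : 0 < α) (hα1 : α ≤ 1)
    (X : ℕ → Ω → (ZMod n → Bool))
    (hstart : ∀ᵐ ω ∂μ, X 0 ω = fun _ => false)
    (hstep : ∀ (t : ℕ) (f : ℕ → ZMod n → Bool) (c' : ZMod n → Bool),
      μ {ω | X (t + 1) ω = c' ∧ ∀ s ≤ t, X s ω = f s}
        = ENNReal.ofReal (stepProb (cycleGraph n) α (f t) c')
            * μ {ω | ∀ s ≤ t, X s ω = f s}) :
    1 - ENNReal.ofReal (1 / n)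
      ≤ μ {ω | ∃ t : ℕ, (t : ℝ) ≤ 2 / α * n * Real.log n ∧ X t ω = fun _ => true} := by
  have hn0 : (0:ℝ) < n := by
    have : 0 < n := by omega
    exact_mod_cast this
  -- cylinder one-step recursion
  have hcylstep : ∀ (t : ℕ) (g : ℕ → ZMod n → Bool) (c : ZMod n → Bool),
      μ {ω | ∀ s ≤ t + 1, X s ω = (Function.update g (t+1) c) s}
        = ENNReal.ofReal (stepProb (cycleGraph n) α (g t) c)
            * μ {ω | ∀ s ≤ t, X s ω = g s} := by
    intro t g c
    have h1 : {ω | ∀ s ≤ t + 1, X s ω = (Function.update g (t+1) c) s}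
        = {ω | X (t+1) ω = c ∧ ∀ s ≤ t, X s ω = (Function.update g (t+1) c) s} := by
      ext ω
      simp only [Set.mem_setOf_eq]
      constructor
      · intro h
        refine ⟨by rw [h (t+1) le_rfl, Function.update_self], fun s hs => h s (by omega)⟩
      · rintro ⟨h1, h2⟩ s hs
        rcases eq_or_ne s (t+1) with rfl | hne
        · rw [Function.update_self]; exact h1
        · exact h2 s (by omega)
    have h2 : {ω | ∀ s ≤ t, X s ω = (Function.update g (t+1) c) s}
        = {ω | ∀ s ≤ t, X s ω = g s} := by
      ext ω
      simp only [Set.mem_setOf_eq]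
      constructor <;> intro h s hs
      · rw [← Function.update_of_ne (by omega : s ≠ t+1) c g]; exact h s hs
      · rw [Function.update_of_ne (by omega : s ≠ t+1) c g]; exact h s hs
    rw [h1, ← h2, hstep t (Function.update g (t+1) c) c,
      Function.update_of_ne (by omega : t ≠ t+1) c g]
  -- the invariant
  have Hinv : ∀ (t : ℕ) (c : ZMod n → Bool),
      (∑ g ∈ pasts n t, if g t = c then μ {ω | ∀ s ≤ t, X s ω = g s} else 0)
        ≤ ENNReal.ofReal (mchain n α t c) := by
    intro t
    induction t with
    | zero =>
      intro c
      rw [pasts_sum_zero (fun g => if g 0 = c then μ {ω | ∀ s ≤ 0, X s ω = g s} else 0)]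
      have hset : ∀ g : ℕ → ZMod n → Bool,
          {ω | ∀ s ≤ 0, X s ω = g s} = {ω | X 0 ω = g 0} := by
        intro g; ext ω
        simp only [Set.mem_setOf_eq]
        constructor
        · intro h; exact h 0 le_rfl
        · intro h s hs; rw [Nat.le_zero.1 hs]; exact h
      have hupdate : ∀ c'' : ZMod n → Bool,
          (Function.update (fun _ _ => false) 0 c'') 0 = c'' := fun _ =>
        Function.update_self _ _ _
      simp only [hset, hupdate]
      rw [Finset.sum_ite_eq' Finset.univ c
        (fun c'' => μ {ω | X 0 ω = c''})]
      simp only [Finset.mem_univ, if_true]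
      unfold mchain
      by_cases hc : c = fun _ => false
      · subst hc
        rw [if_pos rfl, ENNReal.ofReal_one]
        exact prob_le_one
      · rw [if_neg hc]
        have hnull : μ {ω | ¬ X 0 ω = fun _ => false} = 0 := by
          exact hstart
        have : μ {ω | X 0 ω = c} = 0 := by
          apply measure_mono_null _ hnull
          intro ω hω
          simp only [Set.mem_setOf_eq] at hω ⊢
          rw [hω]; exact hc
        simp [this]
    | succ t ih =>
      intro c'
      rw [pasts_sum_succ t
        (fun g => if g (t+1) = c' then μ {ω | ∀ s ≤ t+1, X s ω = g s} else 0)]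
      have hper : ∀ g ∈ pasts n t,
          (∑ c : ZMod n → Bool,
            if (Function.update g (t+1) c) (t+1) = c'
              then μ {ω | ∀ s ≤ t+1, X s ω = (Function.update g (t+1) c) s} else 0)
          = ENNReal.ofReal (stepProb (cycleGraph n) α (g t) c')
              * μ {ω | ∀ s ≤ t, X s ω = g s} := by
        intro g hg
        have : ∀ c : ZMod n → Bool,
            (if (Function.update g (t+1) c) (t+1) = c'
              then μ {ω | ∀ s ≤ t+1, X s ω = (Function.update g (t+1) c) s} else 0)
            = (if c = c'
              then ENNReal.ofReal (stepProb (cycleGraph n) α (g t) c)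
                * μ {ω | ∀ s ≤ t, X s ω = g s} else 0) := by
          intro c
          rw [Function.update_self, hcylstep t g c]
        simp only [this]
        rw [Finset.sum_ite_eq' Finset.univ c'
          (fun c => ENNReal.ofReal (stepProb (cycleGraph n) α (g t) c)
            * μ {ω | ∀ s ≤ t, X s ω = g s})]
        simp only [Finset.mem_univ, if_true]
      rw [Finset.sum_congr rfl hper]
      -- partition by the value of g t
      have hsplit : ∀ g ∈ pasts n t,
          ENNReal.ofReal (stepProb (cycleGraph n) α (g t) c')
              * μ {ω | ∀ s ≤ t, X s ω = g s}
          = ∑ c : ZMod n → Bool,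
              ENNReal.ofReal (stepProb (cycleGraph n) α c c')
                * (if g t = c then μ {ω | ∀ s ≤ t, X s ω = g s} else 0) := by
        intro g hg
        rw [Finset.sum_eq_single (g t)]
        · rw [if_pos rfl]
        · intro c _ hne
          rw [if_neg (fun h => hne h.symm), mul_zero]
        · intro h; exact absurd (Finset.mem_univ _) h
      rw [Finset.sum_congr rfl hsplit, Finset.sum_comm]
      have hfinal : ∀ c : ZMod n → Bool,
          (∑ g ∈ pasts n t,
            ENNReal.ofReal (stepProb (cycleGraph n) α c c')
              * (if g t = c then μ {ω | ∀ s ≤ t, X s ω = g s} else 0))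
          ≤ ENNReal.ofReal (mchain n α t c * stepProb (cycleGraph n) α c c') := by
        intro c
        rw [← Finset.mul_sum]
        calc ENNReal.ofReal (stepProb (cycleGraph n) α c c')
              * (∑ g ∈ pasts n t, if g t = c then μ {ω | ∀ s ≤ t, X s ω = g s} else 0)
            ≤ ENNReal.ofReal (stepProb (cycleGraph n) α c c')
              * ENNReal.ofReal (mchain n α t c) := by
              exact mul_le_mul_right (ih c) _
          _ = ENNReal.ofReal (mchain n α t c * stepProb (cycleGraph n) α c c') := by
              rw [← ENNReal.ofReal_mul (stepProb_nonneg _ hα0.le hα1 c c'), mul_comm]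
      calc (∑ c : ZMod n → Bool, ∑ g ∈ pasts n t,
            ENNReal.ofReal (stepProb (cycleGraph n) α c c')
              * (if g t = c then μ {ω | ∀ s ≤ t, X s ω = g s} else 0))
          ≤ ∑ c : ZMod n → Bool,
              ENNReal.ofReal (mchain n α t c * stepProb (cycleGraph n) α c c') :=
            Finset.sum_le_sum fun c _ => hfinal c
        _ = ENNReal.ofReal (mchain n α (t+1) c') := by
            rw [← ENNReal.ofReal_sum_of_nonneg]
            · rfl
            · intro c _
              exact mul_nonneg (mchain_nonneg hα0.le hα1 t c)
                (stepProb_nonneg _ hα0.le hα1 c c')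
  -- assemble
  set T : ℝ := 2 / α * n * Real.log n with hTdef
  have hT0 : 0 ≤ T := by
    apply mul_nonneg (mul_nonneg (by positivity) hn0.le)
    apply Real.log_nonneg
    have h1 : (1:ℕ) ≤ n := by omega
    exact_mod_cast h1
  set t0 : ℕ := ⌊T⌋₊ with ht0def
  have ht0T : (t0:ℝ) ≤ T := Nat.floor_le hT0
  have hbad : μ {ω | ¬ X t0 ω = fun _ => true} ≤ ENNReal.ofReal (1/n) := by
    have hcover : {ω | ¬ X t0 ω = fun _ => true}
        ⊆ ⋃ g ∈ (pasts n t0).filter (fun g => ¬ g t0 = fun _ => true),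
            {ω | ∀ s ≤ t0, X s ω = g s} := by
      intro ω hω
      simp only [Set.mem_setOf_eq] at hω
      refine Set.mem_biUnion
        (Finset.mem_coe.2 (Finset.mem_filter.2
          ⟨trunc_mem t0 (fun s => X s ω), by simpa using hω⟩)) ?_
      intro s hs
      simp [hs]
    have hstep1 : μ {ω | ¬ X t0 ω = fun _ => true}
        ≤ ∑ g ∈ (pasts n t0).filter (fun g => ¬ g t0 = fun _ => true),
            μ {ω | ∀ s ≤ t0, X s ω = g s} :=
      (measure_mono hcover).trans (measure_biUnion_finset_le _ _)
    have hstep2 : (∑ g ∈ (pasts n t0).filter (fun g => ¬ g t0 = fun _ => true),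
            μ {ω | ∀ s ≤ t0, X s ω = g s})
        = ∑ c ∈ Finset.univ.erase (fun _ : ZMod n => true),
            ∑ g ∈ pasts n t0, (if g t0 = c then μ {ω | ∀ s ≤ t0, X s ω = g s} else 0) := by
      rw [Finset.sum_filter, Finset.sum_comm]
      apply Finset.sum_congr rfl
      intro g _
      rw [Finset.sum_ite_eq (Finset.univ.erase (fun _ : ZMod n => true)) (g t0)
        (fun _ => μ {ω | ∀ s ≤ t0, X s ω = g s})]
      by_cases hgt : g t0 = fun _ : ZMod n => true
      · rw [if_neg (by simpa using hgt), if_neg]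
        simp [Finset.mem_erase, hgt]
      · rw [if_pos (by simpa using hgt), if_pos]
        simp [Finset.mem_erase, hgt]
    have hstep3 : (∑ c ∈ Finset.univ.erase (fun _ : ZMod n => true),
            ∑ g ∈ pasts n t0, (if g t0 = c then μ {ω | ∀ s ≤ t0, X s ω = g s} else 0))
        ≤ ∑ c ∈ Finset.univ.erase (fun _ : ZMod n => true),
            ENNReal.ofReal (mchain n α t0 c) :=
      Finset.sum_le_sum fun c _ => Hinv t0 c
    have hreal : (∑ c ∈ Finset.univ.erase (fun _ : ZMod n => true), mchain n α t0 c)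
        ≤ 1 / n := by
      have h1 : (∑ c ∈ Finset.univ.erase (fun _ : ZMod n => true), mchain n α t0 c)
          ≤ ∑ c ∈ Finset.univ.erase (fun _ : ZMod n => true), mchain n α t0 c * phiZ c := by
        apply Finset.sum_le_sum
        intro c hc
        have hc' : c ≠ fun _ => true := (Finset.mem_erase.1 hc).1
        exact le_mul_of_one_le_right (mchain_nonneg hα0.le hα1 t0 c) (phiZ_ge_one c hc')
      have h2 : (∑ c ∈ Finset.univ.erase (fun _ : ZMod n => true), mchain n α t0 c * phiZ c)
          ≤ ∑ c : ZMod n → Bool, mchain n α t0 c * phiZ c := by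
        apply Finset.sum_le_sum_of_subset_of_nonneg (Finset.erase_subset _ _)
        intro c _ _
        exact mul_nonneg (mchain_nonneg hα0.le hα1 t0 c) (phiZ_nonneg c)
      have h3 : (∑ c : ZMod n → Bool, mchain n α t0 c * phiZ c) = (1 - α/n)^t0 * n :=
        sum_mchain_phi hn t0
      have h4 : (n:ℝ) * (1 - α/n)^t0 ≤ 1/n := analytic_bound n hn α hα0 hα1
      calc (∑ c ∈ Finset.univ.erase (fun _ : ZMod n => true), mchain n α t0 c)
          ≤ (1 - α/n)^t0 * n := by rw [← h3]; exact le_trans h1 h2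
        _ = (n:ℝ) * (1 - α/n)^t0 := by ring
        _ ≤ 1/n := h4
    calc μ {ω | ¬ X t0 ω = fun _ => true}
        ≤ ∑ c ∈ Finset.univ.erase (fun _ : ZMod n => true),
            ENNReal.ofReal (mchain n α t0 c) := le_trans hstep1 (hstep2 ▸ hstep3)
      _ = ENNReal.ofReal (∑ c ∈ Finset.univ.erase (fun _ : ZMod n => true),
            mchain n α t0 c) :=
          (ENNReal.ofReal_sum_of_nonneg fun c _ => mchain_nonneg hα0.le hα1 t0 c).symm
      _ ≤ ENNReal.ofReal (1/n) := ENNReal.ofReal_le_ofReal hreal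
  have hEc : {ω | ∃ t : ℕ, (t:ℝ) ≤ T ∧ X t ω = fun _ => true}ᶜ
      ⊆ {ω | ¬ X t0 ω = fun _ => true} := by
    intro ω hω
    simp only [Set.mem_compl_iff, Set.mem_setOf_eq, not_exists] at hω
    intro hX
    exact hω t0 ⟨ht0T, hX⟩
  rw [tsub_le_iff_right]
  calc (1:ENNReal) = μ Set.univ := measure_univ.symm
    _ = μ ({ω | ∃ t : ℕ, (t:ℝ) ≤ T ∧ X t ω = fun _ => true}
          ∪ {ω | ∃ t : ℕ, (t:ℝ) ≤ T ∧ X t ω = fun _ => true}ᶜ) := by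
        rw [Set.union_compl_self]
    _ ≤ μ {ω | ∃ t : ℕ, (t:ℝ) ≤ T ∧ X t ω = fun _ => true}
          + μ ({ω | ∃ t : ℕ, (t:ℝ) ≤ T ∧ X t ω = fun _ => true}ᶜ) := measure_union_le _ _
    _ ≤ μ {ω | ∃ t : ℕ, (t:ℝ) ≤ T ∧ X t ω = fun _ => true} + ENNReal.ofReal (1/n) := by
        exact add_le_add_right (le_trans (measure_mono hEc) hbad) _
end

section
/- Let X_t be the number of ones in the biased majority dynamics on the cycle C_n, with bias α ∈ (0,1]. Conditioned on the configuration at time t-1 having k ones, with B_i, S_i defined as the nodes of color i with two resp. one neighbor of the opposite color, the one-step transition probabilities are: decrease by one with probability (1-α)(|B_1| + |S_1|/2)/n, increase by one with probability α(n-k)/n + (1-α)(|B_0| + |S_0|/2)/n, and stay with the remaining probability; consequently E[X_t | X_{t-1} = k] = k + α(n-k)/n. -/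
open Finset
open scoped Classical

/-- Number of ones in a configuration. -/
noncomputable def onesCount {n : ℕ} [NeZero n] (c : ZMod n → Bool) : ℕ :=
  (univ.filter (fun v => c v = true)).card

section Aux

lemma cycle_nbhd (n : ℕ) [NeZero n] (hn : 3 ≤ n) (u : ZMod n) :
    (cycleGraph n).neighborFinset u = {u+1, u-1} := by
  haveI : Fact (1 < n) := ⟨by omega⟩
  ext v
  rw [SimpleGraph.mem_neighborFinset]
  simp only [SimpleGraph.mem_neighborFinset, cycleGraph, SimpleGraph.fromRel_adj,
    Finset.mem_insert, Finset.mem_singleton]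
  have h1 : (u : ZMod n) ≠ u + 1 := by
    intro h; exact one_ne_zero (by linear_combination -h)
  have h1' : (u : ZMod n) ≠ u - 1 := by
    intro h; exact one_ne_zero (by linear_combination h)
  constructor
  · rintro ⟨hne, h | h⟩
    · left; exact h
    · right; rw [h]; ring
  · rintro (h | h)
    · exact ⟨h ▸ h1, Or.inl h⟩
    · exact ⟨h ▸ h1', Or.inr (by rw [h]; ring)⟩

lemma cycle_ne (n : ℕ) [NeZero n] (hn : 3 ≤ n) (u : ZMod n) : u + 1 ≠ u - 1 := by
  intro h
  have h0 : ((2:ℕ) : ZMod n) = 0 := by push_cast; linear_combination h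
  rw [ZMod.natCast_eq_zero_iff] at h0
  have := Nat.le_of_dvd (by norm_num) h0
  omega

lemma cycle_deg (n : ℕ) [NeZero n] (hn : 3 ≤ n) (u : ZMod n) :
    (cycleGraph n).degree u = 2 := by
  rw [SimpleGraph.degree, cycle_nbhd n hn u,
    Finset.card_insert_of_notMem (by simpa using cycle_ne n hn u)]
  simp

lemma maj_formula (n : ℕ) [NeZero n] (hn : 3 ≤ n) (c : ZMod n → Bool) (u : ZMod n) :
    majorityProb (cycleGraph n) c u =
      ((if c (u+1) = true then (1:ℝ) else 0) + (if c (u-1) = true then 1 else 0)) / 2 := by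
  have hcard : (({u+1, u-1} : Finset (ZMod n)).filter (fun v => c v = true)).card
      = (if c (u+1) = true then 1 else 0) + (if c (u-1) = true then 1 else 0) := by
    rw [show ({u+1, u-1} : Finset (ZMod n)) = insert (u+1) {u-1} from rfl,
      Finset.filter_insert, Finset.filter_singleton]
    rcases hx : c (u+1) <;> rcases hy : c (u-1) <;>
      simp [hx, hy, Finset.card_insert_of_notMem, cycle_ne n hn u]
  rw [majorityProb, cycle_deg n hn u, cycle_nbhd n hn u, hcard]
  rcases hx : c (u+1) <;> rcases hy : c (u-1) <;> norm_num [hx, hy]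

lemma oc_update_true {n : ℕ} [NeZero n] (c : ZMod n → Bool) (u : ZMod n) :
    onesCount (Function.update c u true)
      = if c u = true then onesCount c else onesCount c + 1 := by
  have hset : univ.filter (fun v => Function.update c u true v = true)
      = insert u (univ.filter (fun v => c v = true)) := by
    ext v
    by_cases h : v = u <;> simp [Function.update_apply, h]
  rw [onesCount, hset]
  by_cases h : c u = true
  · rw [Finset.insert_eq_self.mpr (by simp [h]), if_pos h]; rfl
  · rw [Finset.card_insert_of_notMem (by simp [h]), if_neg h]; rfl

lemma oc_update_false {n : ℕ} [NeZero n] (c : ZMod n → Bool) (u : ZMod n) :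
    onesCount (Function.update c u false)
      = if c u = true then onesCount c - 1 else onesCount c := by
  have hset : univ.filter (fun v => Function.update c u false v = true)
      = (univ.filter (fun v => c v = true)).erase u := by
    ext v
    by_cases h : v = u <;> simp [Function.update_apply, h]
  rw [onesCount, hset]
  by_cases h : c u = true
  · rw [Finset.card_erase_of_mem (by simp [h]), if_pos h]; rfl
  · rw [Finset.erase_eq_of_notMem (by simp [h]), if_neg h]; rfl

lemma oc_pos {n : ℕ} [NeZero n] (c : ZMod n → Bool) (u : ZMod n) (h : c u = true) :
    1 ≤ onesCount c :=
  Finset.card_pos.mpr ⟨u, by simp [h]⟩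

lemma oc_le {n : ℕ} [NeZero n] (c : ZMod n → Bool) : onesCount c ≤ n := by
  have := Finset.card_filter_le (univ : Finset (ZMod n)) (fun v => c v = true)
  simpa [ZMod.card, onesCount] using this

lemma swap_sum {n : ℕ} [NeZero n] (α : ℝ) (c : ZMod n → Bool)
    (g : (ZMod n → Bool) → ℝ) :
    ∑ c' : ZMod n → Bool, g c' * stepProb (cycleGraph n) α c c'
      = (1 / (n:ℝ)) * ∑ u : ZMod n,
        (g (Function.update c u true) * (α + (1 - α) * majorityProb (cycleGraph n) c u) +
         g (Function.update c u false)
           * (1 - (α + (1 - α) * majorityProb (cycleGraph n) c u))) := by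
  simp only [stepProb, ZMod.card]
  conv_lhs => enter [2, x]; rw [mul_left_comm, Finset.mul_sum]
  rw [← Finset.mul_sum, Finset.sum_comm]
  congr 1
  refine Finset.sum_congr rfl fun u _ => ?_
  simp only [mul_add, mul_ite, mul_zero, Finset.sum_add_distrib, Finset.sum_ite_eq',
    Finset.mem_univ, if_true]
  congr!

lemma sum_shift {n : ℕ} [NeZero n] (f : ZMod n → ℝ) :
    ∑ u : ZMod n, f u = ∑ u : ZMod n, f (u + 1) :=
  (Fintype.sum_equiv (Equiv.addRight (1 : ZMod n)) (fun u => f (u + 1)) f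
    (fun _ => rfl)).symm

lemma struct_lemma {n : ℕ} [NeZero n] (c : ZMod n → Bool) :
    ∑ u : ZMod n, (if c u = false then (1:ℝ) else 0)
        * ((if c (u+1) = true then (1:ℝ) else 0) + (if c (u-1) = true then 1 else 0))
      = ∑ u : ZMod n, (if c u = true then (1:ℝ) else 0)
        * ((if c (u+1) = false then (1:ℝ) else 0) + (if c (u-1) = false then 1 else 0)) := by
  simp only [mul_add]
  rw [Finset.sum_add_distrib, Finset.sum_add_distrib]
  have A : ∑ u : ZMod n, (if c u = false then (1:ℝ) else 0) * (if c (u+1) = true then 1 else 0)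
      = ∑ u : ZMod n, (if c u = true then (1:ℝ) else 0) * (if c (u-1) = false then 1 else 0) := by
    rw [sum_shift (fun u => (if c u = true then (1:ℝ) else 0) * (if c (u-1) = false then 1 else 0))]
    refine Finset.sum_congr rfl fun u _ => ?_
    simp only [add_sub_cancel_right]
    ring
  have B : ∑ u : ZMod n, (if c u = false then (1:ℝ) else 0) * (if c (u-1) = true then 1 else 0)
      = ∑ u : ZMod n, (if c u = true then (1:ℝ) else 0) * (if c (u+1) = false then 1 else 0) := by
    rw [sum_shift (fun u => (if c u = false then (1:ℝ) else 0) * (if c (u-1) = true then 1 else 0))]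
    refine Finset.sum_congr rfl fun u _ => ?_
    simp only [add_sub_cancel_right]
    ring
  rw [A, B, add_comm]

end Aux

/-- One-step transition probabilities of the biased majority dynamics on the
cycle from a configuration `c` with `k` ones: the number of ones decreases by
one with probability `(1-α)(|B₁| + |S₁|/2)/n`, increases by one with probability
`α(n-k)/n + (1-α)(|B₀| + |S₀|/2)/n`; consequently the conditional expectation of
the next number of ones is `k + α(n-k)/n`. -/
theorem stmt_17 (n : ℕ) [NeZero n] (hn : 3 ≤ n)
    (α : ℝ) (hα0 : 0 < α) (hα1 : α ≤ 1)
    (c : ZMod n → Bool) (k : ℕ) (hk : onesCount c = k)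
    (B S : Bool → Finset (ZMod n))
    (hB : ∀ i, B i = univ.filter (fun v => c v = i ∧ c (v + 1) = !i ∧ c (v - 1) = !i))
    (hS : ∀ i, S i = univ.filter (fun v => c v = i ∧
      ((c (v + 1) = !i ∧ c (v - 1) = i) ∨ (c (v + 1) = i ∧ c (v - 1) = !i)))) :
    (∑ c' ∈ univ.filter (fun c' : ZMod n → Bool => (onesCount c' : ℤ) = (k : ℤ) - 1),
        stepProb (cycleGraph n) α c c'
      = (1 - α) * (((B true).card : ℝ) + (S true).card / 2) / n) ∧
    (∑ c' ∈ univ.filter (fun c' : ZMod n → Bool => onesCount c' = k + 1),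
        stepProb (cycleGraph n) α c c'
      = α * ((n : ℝ) - k) / n + (1 - α) * (((B false).card : ℝ) + (S false).card / 2) / n) ∧
    (∑ c' : ZMod n → Bool, (onesCount c' : ℝ) * stepProb (cycleGraph n) α c c'
      = (k : ℝ) + α * ((n : ℝ) - k) / n) := by
  subst hk
  have hn0 : (n:ℝ) ≠ 0 := Nat.cast_ne_zero.mpr (NeZero.ne n)
  have hfalse : ∑ u : ZMod n, (if c u = false then (1:ℝ) else 0)
      = (n:ℝ) - onesCount c := by
    have hpt : ∀ u ∈ (univ : Finset (ZMod n)), (if c u = false then (1:ℝ) else 0)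
        = 1 - (if c u = true then 1 else 0) := by
      intro u _; rcases h : c u <;> simp [h]
    rw [Finset.sum_congr rfl hpt, Finset.sum_sub_distrib, Finset.sum_const,
      Finset.card_univ, ZMod.card, Finset.sum_boole, nsmul_eq_mul, mul_one, onesCount]
  refine ⟨?_, ?_, ?_⟩
  · -- decrease by one
    have swapA := swap_sum α c
      (fun c' => if (onesCount c' : ℤ) = (onesCount c : ℤ) - 1 then (1:ℝ) else 0)
    simp only [ite_mul, one_mul, zero_mul] at swapA
    rw [Finset.sum_filter, swapA]
    have hBS : ∑ u : ZMod n,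
        ((if ((onesCount (Function.update c u true)) : ℤ) = (onesCount c : ℤ) - 1
            then α + (1 - α) * majorityProb (cycleGraph n) c u else 0) +
         (if ((onesCount (Function.update c u false)) : ℤ) = (onesCount c : ℤ) - 1
            then 1 - (α + (1 - α) * majorityProb (cycleGraph n) c u) else 0))
        = (1 - α) * (((B true).card : ℝ) + ((S true).card : ℝ) / 2) := by
      rw [hB true, hS true, ← Finset.sum_boole, ← Finset.sum_boole,
        Finset.sum_div, ← Finset.sum_add_distrib, Finset.mul_sum]
      refine Finset.sum_congr rfl fun u _ => ?_
      rw [maj_formula n hn c u, oc_update_true c u, oc_update_false c u]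
      rcases hcu : c u
      · have hkx : ¬((onesCount c : ℤ) + 1 = (onesCount c : ℤ) - 1) := by omega
        have hky : ¬(((onesCount c : ℕ):ℤ) = (onesCount c : ℤ) - 1) := by omega
        rcases h1 : c (u+1) <;> rcases h2 : c (u-1) <;>
          simp [hcu, h1, h2, hkx, hky]
      · have hk1 : 1 ≤ onesCount c := oc_pos c u hcu
        have hkx : ¬(((onesCount c : ℕ):ℤ) = (onesCount c : ℤ) - 1) := by omega
        have hky : (((onesCount c - 1 : ℕ)):ℤ) = (onesCount c : ℤ) - 1 := by omega
        rcases h1 : c (u+1) <;> rcases h2 : c (u-1) <;>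
          simp [hcu, h1, h2, hkx, hky] <;> ring
    rw [hBS]; ring
  · -- increase by one
    have swapB := swap_sum α c
      (fun c' => if onesCount c' = onesCount c + 1 then (1:ℝ) else 0)
    simp only [ite_mul, one_mul, zero_mul] at swapB
    rw [Finset.sum_filter, swapB]
    have hcards : ∑ u : ZMod n,
        ((if c u = false ∧ c (u+1) = !false ∧ c (u-1) = !false then (1:ℝ) else 0)
          + (if c u = false ∧ ((c (u+1) = !false ∧ c (u-1) = false)
              ∨ (c (u+1) = false ∧ c (u-1) = !false)) then (1:ℝ) else 0) / 2)
        = ((B false).card : ℝ) + ((S false).card : ℝ) / 2 := by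
      rw [hB false, hS false, ← Finset.sum_boole, ← Finset.sum_boole,
        Finset.sum_div, ← Finset.sum_add_distrib]
    have key : ∀ u ∈ (univ : Finset (ZMod n)),
        ((if onesCount (Function.update c u true) = onesCount c + 1
            then α + (1 - α) * majorityProb (cycleGraph n) c u else 0) +
         (if onesCount (Function.update c u false) = onesCount c + 1
            then 1 - (α + (1 - α) * majorityProb (cycleGraph n) c u) else 0))
        = α * (if c u = false then (1:ℝ) else 0)
          + (1 - α) * ((if c u = false ∧ c (u+1) = !false ∧ c (u-1) = !false
              then (1:ℝ) else 0)
            + (if c u = false ∧ ((c (u+1) = !false ∧ c (u-1) = false)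
                ∨ (c (u+1) = false ∧ c (u-1) = !false)) then (1:ℝ) else 0) / 2) := by
      intro u _
      rw [maj_formula n hn c u, oc_update_true c u, oc_update_false c u]
      have b1 : ¬(onesCount c = onesCount c + 1) := by omega
      have b2 : ¬(onesCount c - 1 = onesCount c + 1) := by omega
      rcases hcu : c u
      · rcases h1 : c (u+1) <;> rcases h2 : c (u-1) <;>
          simp [hcu, h1, h2, b1, b2] <;> ring
      · rcases h1 : c (u+1) <;> rcases h2 : c (u-1) <;>
          simp [hcu, h1, h2, b1, b2]
    rw [Finset.sum_congr rfl key, Finset.sum_add_distrib, ← Finset.mul_sum,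
      ← Finset.mul_sum, hfalse, hcards]
    ring
  · -- expectation
    have swapC := swap_sum α c (fun c' => ((onesCount c' : ℝ)))
    rw [swapC]
    have keyC : ∀ u ∈ (univ : Finset (ZMod n)),
        ((onesCount (Function.update c u true) : ℝ)
            * (α + (1 - α) * majorityProb (cycleGraph n) c u) +
         (onesCount (Function.update c u false) : ℝ)
            * (1 - (α + (1 - α) * majorityProb (cycleGraph n) c u)))
        = (onesCount c : ℝ) + α * (if c u = false then (1:ℝ) else 0)
          + ((1-α)/2 * ((if c u = false then (1:ℝ) else 0)
              * ((if c (u+1) = true then (1:ℝ) else 0) + (if c (u-1) = true then 1 else 0)))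
            - (1-α)/2 * ((if c u = true then (1:ℝ) else 0)
              * ((if c (u+1) = false then (1:ℝ) else 0) + (if c (u-1) = false then 1 else 0)))) := by
      intro u _
      rw [maj_formula n hn c u, oc_update_true c u, oc_update_false c u]
      rcases hcu : c u
      · rcases h1 : c (u+1) <;> rcases h2 : c (u-1) <;>
          simp [hcu, h1, h2] <;> push_cast <;> ring
      · have hk1 : 1 ≤ onesCount c := oc_pos c u hcu
        have hc1 : ((onesCount c - 1 : ℕ):ℝ) = (onesCount c : ℝ) - 1 := by
          rw [Nat.cast_sub hk1, Nat.cast_one]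
        rcases h1 : c (u+1) <;> rcases h2 : c (u-1) <;>
          simp [hcu, h1, h2, hc1] <;> push_cast <;> ring
    rw [Finset.sum_congr rfl keyC, Finset.sum_add_distrib, Finset.sum_add_distrib,
      Finset.sum_sub_distrib, ← Finset.mul_sum, ← Finset.mul_sum, ← Finset.mul_sum,
      struct_lemma c, hfalse, Finset.sum_const, Finset.card_univ, ZMod.card,
      nsmul_eq_mul, sub_self, add_zero]
    field_simp
end
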